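/- arXiv:1608.00698 — 8 statements merged into one kernel-verified Lean document; each statement's English description precedes it below -/
import Mathlib

section
/- Fix an integer n ≥ 1 and reals σ_w² > 0, ζ > 0, σ_a² > 0. For z ≥ 0 define D(z) = ∫₀^ζ (σ_w²+θ)^{-n} exp(−z/(σ_w²+θ)) dθ and N(z) = ∫_{σ_a²}^{σ_a²+ζ} (σ_w²+θ)^{-n} exp(−z/(σ_w²+θ)) dθ. Then the ratio Λ(z) = N(z)/D(z) is nondecreasing on [0,∞): for all 0 ≤ x ≤ y, N(x)·D(y) ≤ N(y)·D(x). -/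
open MeasureTheory intervalIntegral

private lemma awgn_integ (σw2 : ℝ) (hσ : 0 < σw2) (n : ℕ) (z c d : ℝ)
    (hc : 0 ≤ c) (hd : 0 ≤ d) :
    IntervalIntegrable (fun θ => ((σw2 + θ) ^ n)⁻¹ * Real.exp (-z / (σw2 + θ)))
      volume c d := by
  apply ContinuousOn.intervalIntegrable
  have h : ∀ θ ∈ Set.uIcc c d, σw2 + θ ≠ 0 := by
    intro θ hθ
    have h0 : 0 ≤ θ := le_trans (le_min hc hd) hθ.1
    positivity
  exact (((continuousOn_const.add continuousOn_id).pow n).inv₀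
      (fun θ hθ => pow_ne_zero _ (h θ hθ))).mul
    (Real.continuous_exp.comp_continuousOn
      (continuousOn_const.div (continuousOn_const.add continuousOn_id) h))

private lemma awgn_pair (σw2 : ℝ) (hσ : 0 < σw2) (n : ℕ) (x y : ℝ) (hxy : x ≤ y)
    (a₁ b₁ a₂ b₂ : ℝ) (h02 : 0 ≤ a₂) (h2 : a₂ ≤ b₂) (h21 : b₂ ≤ a₁) (h1 : a₁ ≤ b₁) :
    (∫ θ in a₁..b₁, ((σw2 + θ) ^ n)⁻¹ * Real.exp (-x / (σw2 + θ))) *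
      (∫ θ in a₂..b₂, ((σw2 + θ) ^ n)⁻¹ * Real.exp (-y / (σw2 + θ))) ≤
    (∫ θ in a₁..b₁, ((σw2 + θ) ^ n)⁻¹ * Real.exp (-y / (σw2 + θ))) *
      (∫ θ in a₂..b₂, ((σw2 + θ) ^ n)⁻¹ * Real.exp (-x / (σw2 + θ))) := by
  have h01 : 0 ≤ a₁ := le_trans (le_trans h02 h2) h21
  have hA1 : 0 < σw2 + a₁ := by linarith
  set s : ℝ := (σw2 + a₁)⁻¹ with hs
  set c : ℝ := y - x with hc
  have hc0 : 0 ≤ c := by simp [hc]; linarith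
  -- Step A : upper-interval integral at x is ≤ exp (c*s) times the one at y
  have stepA :
      (∫ θ in a₁..b₁, ((σw2 + θ) ^ n)⁻¹ * Real.exp (-x / (σw2 + θ))) ≤
      Real.exp (c * s) *
        ∫ θ in a₁..b₁, ((σw2 + θ) ^ n)⁻¹ * Real.exp (-y / (σw2 + θ)) := by
    rw [← intervalIntegral.integral_const_mul]
    apply intervalIntegral.integral_mono_on h1
      (awgn_integ σw2 hσ n x a₁ b₁ h01 (le_trans h01 h1))
      ((awgn_integ σw2 hσ n y a₁ b₁ h01 (le_trans h01 h1)).const_mul _)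
    intro θ hθ
    have hθpos : 0 < σw2 + θ := by linarith [hθ.1]
    have hinv : (σw2 + θ)⁻¹ ≤ s := by
      rw [hs]
      exact inv_anti₀ hA1 (by linarith [hθ.1])
    have key : c * (σw2 + θ)⁻¹ ≤ c * s := mul_le_mul_of_nonneg_left hinv hc0
    have hexp : Real.exp (-x / (σw2 + θ)) ≤
        Real.exp (c * s) * Real.exp (-y / (σw2 + θ)) := by
      rw [← Real.exp_add]
      apply Real.exp_le_exp.mpr
      have hid : -x / (σw2 + θ) - (-y / (σw2 + θ)) = c * (σw2 + θ)⁻¹ := by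
        rw [hc]; field_simp; ring
      linarith
    calc ((σw2 + θ) ^ n)⁻¹ * Real.exp (-x / (σw2 + θ))
        ≤ ((σw2 + θ) ^ n)⁻¹ * (Real.exp (c * s) * Real.exp (-y / (σw2 + θ))) := by
          apply mul_le_mul_of_nonneg_left hexp (by positivity)
      _ = Real.exp (c * s) * (((σw2 + θ) ^ n)⁻¹ * Real.exp (-y / (σw2 + θ))) := by ring
  -- Step B : lower-interval integral at y is ≤ exp (-(c*s)) times the one at x
  have stepB :
      (∫ θ in a₂..b₂, ((σw2 + θ) ^ n)⁻¹ * Real.exp (-y / (σw2 + θ))) ≤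
      Real.exp (-(c * s)) *
        ∫ θ in a₂..b₂, ((σw2 + θ) ^ n)⁻¹ * Real.exp (-x / (σw2 + θ)) := by
    rw [← intervalIntegral.integral_const_mul]
    apply intervalIntegral.integral_mono_on h2
      (awgn_integ σw2 hσ n y a₂ b₂ h02 (le_trans h02 h2))
      ((awgn_integ σw2 hσ n x a₂ b₂ h02 (le_trans h02 h2)).const_mul _)
    intro θ hθ
    have hθ0 : 0 ≤ θ := le_trans h02 hθ.1
    have hθpos : 0 < σw2 + θ := by linarith
    have hinv : s ≤ (σw2 + θ)⁻¹ := by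
      rw [hs]
      exact inv_anti₀ hθpos (by linarith [hθ.2])
    have key : c * s ≤ c * (σw2 + θ)⁻¹ := mul_le_mul_of_nonneg_left hinv hc0
    have hexp : Real.exp (-y / (σw2 + θ)) ≤
        Real.exp (-(c * s)) * Real.exp (-x / (σw2 + θ)) := by
      rw [← Real.exp_add]
      apply Real.exp_le_exp.mpr
      have hid : -x / (σw2 + θ) - (-y / (σw2 + θ)) = c * (σw2 + θ)⁻¹ := by
        rw [hc]; field_simp; ring
      linarith
    calc ((σw2 + θ) ^ n)⁻¹ * Real.exp (-y / (σw2 + θ))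
        ≤ ((σw2 + θ) ^ n)⁻¹ * (Real.exp (-(c * s)) * Real.exp (-x / (σw2 + θ))) := by
          apply mul_le_mul_of_nonneg_left hexp (by positivity)
      _ = Real.exp (-(c * s)) * (((σw2 + θ) ^ n)⁻¹ * Real.exp (-x / (σw2 + θ))) := by ring
  -- Nonnegativity
  have hPy : 0 ≤ ∫ θ in a₁..b₁, ((σw2 + θ) ^ n)⁻¹ * Real.exp (-y / (σw2 + θ)) := by
    apply intervalIntegral.integral_nonneg h1
    intro θ hθ
    have hp : 0 < σw2 + θ := by linarith [hθ.1]
    positivity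
  have hQy : 0 ≤ ∫ θ in a₂..b₂, ((σw2 + θ) ^ n)⁻¹ * Real.exp (-y / (σw2 + θ)) := by
    apply intervalIntegral.integral_nonneg h2
    intro θ hθ
    have hp : 0 < σw2 + θ := by linarith [hθ.1, h02]
    positivity
  have hmul : Real.exp (c * s) * Real.exp (-(c * s)) = 1 := by
    rw [← Real.exp_add]; simp
  calc (∫ θ in a₁..b₁, ((σw2 + θ) ^ n)⁻¹ * Real.exp (-x / (σw2 + θ))) *
      (∫ θ in a₂..b₂, ((σw2 + θ) ^ n)⁻¹ * Real.exp (-y / (σw2 + θ)))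
      ≤ (Real.exp (c * s) *
          ∫ θ in a₁..b₁, ((σw2 + θ) ^ n)⁻¹ * Real.exp (-y / (σw2 + θ))) *
        (Real.exp (-(c * s)) *
          ∫ θ in a₂..b₂, ((σw2 + θ) ^ n)⁻¹ * Real.exp (-x / (σw2 + θ))) :=
        mul_le_mul stepA stepB hQy (by positivity)
    _ = (Real.exp (c * s) * Real.exp (-(c * s))) *
        ((∫ θ in a₁..b₁, ((σw2 + θ) ^ n)⁻¹ * Real.exp (-y / (σw2 + θ))) *
         (∫ θ in a₂..b₂, ((σw2 + θ) ^ n)⁻¹ * Real.exp (-x / (σw2 + θ)))) := by ring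
    _ = _ := by rw [hmul, one_mul]

/-- Lemma 2 (AWGN case): the likelihood ratio `N z / D z` of Willie's optimal
test is nondecreasing in the total received power `z`, so the optimal detector
is a threshold test on the received power. -/
theorem awgn_likelihood_ratio_monotone
    (n : ℕ) (hn : 1 ≤ n)
    (σw2 ζ σa2 : ℝ) (hσw2 : 0 < σw2) (hζ : 0 < ζ) (hσa2 : 0 < σa2)
    (D N : ℝ → ℝ)
    (hD : ∀ z : ℝ, D z =
      ∫ θ in (0:ℝ)..ζ, ((σw2 + θ) ^ n)⁻¹ * Real.exp (-z / (σw2 + θ)))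
    (hN : ∀ z : ℝ, N z =
      ∫ θ in σa2..(σa2 + ζ), ((σw2 + θ) ^ n)⁻¹ * Real.exp (-z / (σw2 + θ))) :
    ∀ x y : ℝ, 0 ≤ x → x ≤ y → N x * D y ≤ N y * D x := by
  intro x y hx hxy
  rw [hD, hD, hN, hN]
  rcases le_total ζ σa2 with hcase | hcase
  · -- the two intervals are disjoint, apply the pair lemma directly
    exact awgn_pair σw2 hσw2 n x y hxy σa2 (σa2 + ζ) 0 ζ le_rfl hζ.le hcase
      (by linarith)
  · -- overlapping case: split both integrals at σa2 and at ζ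
    have hsplitD : ∀ z : ℝ,
        (∫ θ in (0:ℝ)..ζ, ((σw2 + θ) ^ n)⁻¹ * Real.exp (-z / (σw2 + θ))) =
        (∫ θ in (0:ℝ)..σa2, ((σw2 + θ) ^ n)⁻¹ * Real.exp (-z / (σw2 + θ))) +
        (∫ θ in σa2..ζ, ((σw2 + θ) ^ n)⁻¹ * Real.exp (-z / (σw2 + θ))) := by
      intro z
      exact (intervalIntegral.integral_add_adjacent_intervals
        (awgn_integ σw2 hσw2 n z 0 σa2 le_rfl hσa2.le)
        (awgn_integ σw2 hσw2 n z σa2 ζ hσa2.le hζ.le)).symm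
    have hsplitN : ∀ z : ℝ,
        (∫ θ in σa2..(σa2 + ζ), ((σw2 + θ) ^ n)⁻¹ * Real.exp (-z / (σw2 + θ))) =
        (∫ θ in σa2..ζ, ((σw2 + θ) ^ n)⁻¹ * Real.exp (-z / (σw2 + θ))) +
        (∫ θ in ζ..(σa2 + ζ), ((σw2 + θ) ^ n)⁻¹ * Real.exp (-z / (σw2 + θ))) := by
      intro z
      exact (intervalIntegral.integral_add_adjacent_intervals
        (awgn_integ σw2 hσw2 n z σa2 ζ hσa2.le hζ.le)
        (awgn_integ σw2 hσw2 n z ζ (σa2 + ζ) hζ.le (by linarith))).symm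
    rw [hsplitD, hsplitD, hsplitN, hsplitN]
    set Lx := ∫ θ in (0:ℝ)..σa2, ((σw2 + θ) ^ n)⁻¹ * Real.exp (-x / (σw2 + θ))
    set Ly := ∫ θ in (0:ℝ)..σa2, ((σw2 + θ) ^ n)⁻¹ * Real.exp (-y / (σw2 + θ))
    set Cx := ∫ θ in σa2..ζ, ((σw2 + θ) ^ n)⁻¹ * Real.exp (-x / (σw2 + θ))
    set Cy := ∫ θ in σa2..ζ, ((σw2 + θ) ^ n)⁻¹ * Real.exp (-y / (σw2 + θ))
    set Ux := ∫ θ in ζ..(σa2 + ζ), ((σw2 + θ) ^ n)⁻¹ * Real.exp (-x / (σw2 + θ))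
    set Uy := ∫ θ in ζ..(σa2 + ζ), ((σw2 + θ) ^ n)⁻¹ * Real.exp (-y / (σw2 + θ))
    have I1 : Cx * Ly ≤ Cy * Lx :=
      awgn_pair σw2 hσw2 n x y hxy σa2 ζ 0 σa2 le_rfl hσa2.le le_rfl hcase
    have I2 : Ux * Cy ≤ Uy * Cx :=
      awgn_pair σw2 hσw2 n x y hxy ζ (σa2 + ζ) σa2 ζ hσa2.le hcase le_rfl
        (by linarith)
    have I3 : Ux * Ly ≤ Uy * Lx :=
      awgn_pair σw2 hσw2 n x y hxy ζ (σa2 + ζ) 0 σa2 le_rfl hσa2.le hcase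
        (by linarith)
    nlinarith [I1, I2, I3]
end

section
/- Fix an integer n ≥ 1 and reals σ_w² > 0, ζ > 0, σ_a² > 0. For z ≥ 0 define D(z) = ∫_{σ_w²}^∞ v^{-n} e^{-z/v} e^{-v/ζ} dv and N(z) = ∫_{σ_w²+σ_a²}^∞ v^{-n} e^{-z/v} e^{-v/ζ} dv (both integrals are finite). Then the likelihood ratio Λ(z) = e^{σ_a²/ζ}·N(z)/D(z) is strictly increasing on [0,∞): for every z ≥ 0 and Δ > 0, N(z+Δ)·D(z) > N(z)·D(z+Δ). -/
open MeasureTheory Set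

private lemma g_integrableOn (n : ℕ) {ζ b : ℝ} (hζ : 0 < ζ) (hb : 0 < b)
    {z : ℝ} (hz : 0 ≤ z) :
    IntegrableOn (fun v => (v ^ n)⁻¹ * Real.exp (-z / v) * Real.exp (-v / ζ))
      (Set.Ioi b) := by
  have hmeas : Measurable (fun v : ℝ => (v ^ n)⁻¹ * Real.exp (-z / v) * Real.exp (-v / ζ)) := by
    fun_prop
  have hdom : IntegrableOn (fun v : ℝ => (b ^ n)⁻¹ * Real.exp (-ζ⁻¹ * v)) (Set.Ioi b) :=
    (exp_neg_integrableOn_Ioi b (inv_pos.mpr hζ)).const_mul _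
  refine hdom.mono' (hmeas.aestronglyMeasurable.restrict) ?_
  filter_upwards [ae_restrict_mem measurableSet_Ioi] with v hv
  have hv0 : 0 < v := hb.trans hv
  have h1 : (v ^ n)⁻¹ ≤ (b ^ n)⁻¹ := by
    exact inv_anti₀ (pow_pos hb n) (pow_le_pow_left₀ hb.le hv.le n)
  have h2 : Real.exp (-z / v) ≤ 1 := by
    apply Real.exp_le_one_iff.mpr
    apply div_nonpos_of_nonpos_of_nonneg (by linarith) hv0.le
  have h3 : Real.exp (-v / ζ) = Real.exp (-ζ⁻¹ * v) := by
    rw [neg_div, neg_mul, inv_mul_eq_div]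
  rw [Real.norm_eq_abs, abs_of_nonneg (by positivity)]
  calc (v ^ n)⁻¹ * Real.exp (-z / v) * Real.exp (-v / ζ)
      ≤ (b ^ n)⁻¹ * 1 * Real.exp (-v / ζ) := by
        refine mul_le_mul_of_nonneg_right ?_ (Real.exp_pos _).le
        exact mul_le_mul h1 h2 (Real.exp_pos _).le (by positivity)
    _ = (b ^ n)⁻¹ * Real.exp (-ζ⁻¹ * v) := by rw [mul_one, h3]

private lemma pos_setIntegral {f : ℝ → ℝ} {s : Set ℝ} (hs : MeasurableSet s)
    (hvol : 0 < volume s) (hint : IntegrableOn f s)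
    (hf : ∀ v ∈ s, 0 < f v) : 0 < ∫ v in s, f v := by
  rw [setIntegral_pos_iff_support_of_nonneg_ae ?_ hint]
  · refine lt_of_lt_of_le hvol (measure_mono ?_)
    intro v hv
    exact ⟨(hf v hv).ne', hv⟩
  · filter_upwards [ae_restrict_mem hs] with v hv using (hf v hv).le

/-- Lemma 3 / Appendix C (M = 1 block fading): the exponential-mixture
likelihood ratio `Λ(z) = e^{σ_a²/ζ} N(z)/D(z)` is strictly increasing in the
total received power `z`; moreover both integrals are finite. -/
theorem fading_likelihood_ratio_strict_mono
    (n : ℕ) (hn : 1 ≤ n)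
    (σw2 ζ σa2 : ℝ) (hσw2 : 0 < σw2) (hζ : 0 < ζ) (hσa2 : 0 < σa2)
    (D N : ℝ → ℝ)
    (hD : ∀ z : ℝ, D z =
      ∫ v in Set.Ioi σw2, (v ^ n)⁻¹ * Real.exp (-z / v) * Real.exp (-v / ζ))
    (hN : ∀ z : ℝ, N z =
      ∫ v in Set.Ioi (σw2 + σa2),
        (v ^ n)⁻¹ * Real.exp (-z / v) * Real.exp (-v / ζ)) :
    (∀ z : ℝ, 0 ≤ z → IntegrableOn
      (fun v => (v ^ n)⁻¹ * Real.exp (-z / v) * Real.exp (-v / ζ))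
      (Set.Ioi σw2)) ∧
    (∀ z : ℝ, 0 ≤ z → IntegrableOn
      (fun v => (v ^ n)⁻¹ * Real.exp (-z / v) * Real.exp (-v / ζ))
      (Set.Ioi (σw2 + σa2))) ∧
    (∀ z : ℝ, 0 ≤ z → ∀ Δ : ℝ, 0 < Δ →
      N z * D (z + Δ) < N (z + Δ) * D z) := by
  set b := σw2
  set a := σw2 + σa2 with ha_def
  have hb : 0 < b := hσw2
  have ha : 0 < a := by positivity
  have hba : b < a := by simp [ha_def]; linarith
  set g : ℝ → ℝ → ℝ := fun z v => (v ^ n)⁻¹ * Real.exp (-z / v) * Real.exp (-v / ζ)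
    with hg_def
  have hIntIoi : ∀ c : ℝ, 0 < c → ∀ z : ℝ, 0 ≤ z → IntegrableOn (g z) (Set.Ioi c) :=
    fun c hc z hz => g_integrableOn n hζ hc hz
  refine ⟨fun z hz => hIntIoi b hb z hz, fun z hz => hIntIoi a ha z hz, ?_⟩
  intro z hz Δ hΔ
  have hz' : (0:ℝ) ≤ z + Δ := by linarith
  -- basic facts about g
  have hgpos : ∀ w : ℝ, 0 ≤ w → ∀ v : ℝ, 0 < v → 0 < g w v := by
    intro w hw v hv; simp only [hg_def]; positivity
  have hsplit : ∀ w v : ℝ, 0 < v → g (w + Δ) v = g w v * Real.exp (-Δ / v) := by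
    intro w v hv
    have h : -(w + Δ) / v = -w / v + -Δ / v := by ring
    simp only [hg_def]
    rw [h, Real.exp_add]
    ring
  -- the middle integral
  set I : ℝ → ℝ := fun w => ∫ v in Set.Ioc b a, g w v with hI_def
  have hIntIoc : ∀ w : ℝ, 0 ≤ w → IntegrableOn (g w) (Set.Ioc b a) := by
    intro w hw
    exact (hIntIoi b hb w hw).mono_set Set.Ioc_subset_Ioi_self
  have hDsplit : ∀ w : ℝ, 0 ≤ w → D w = I w + N w := by
    intro w hw
    rw [hD w, hN w, ← Set.Ioc_union_Ioi_eq_Ioi hba.le,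
      setIntegral_union (Set.Ioc_disjoint_Ioi le_rfl) measurableSet_Ioi
        (hIntIoc w hw) (hIntIoi a ha w hw)]
  -- positivity of N z and I z
  have hNpos : 0 < N z := by
    rw [hN z]
    refine pos_setIntegral measurableSet_Ioi ?_ (hIntIoi a ha z hz) ?_
    · simp [Real.volume_Ioi]
    · intro v hv; exact hgpos z hz v (ha.trans hv)
  have hIpos : 0 < I z := by
    refine pos_setIntegral measurableSet_Ioc ?_ (hIntIoc z hz) ?_
    · rw [Real.volume_Ioc]; simp [hba]
    · intro v hv; exact hgpos z hz v (hb.trans hv.1)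
  -- key strict inequality : exp(-Δ/a) * N z < N (z+Δ)
  have hkey : Real.exp (-Δ / a) * N z < N (z + Δ) := by
    have hint1 : IntegrableOn (fun v => Real.exp (-Δ / a) * g z v) (Set.Ioi a) :=
      (hIntIoi a ha z hz).const_mul _
    have hint2 : IntegrableOn (g (z + Δ)) (Set.Ioi a) := hIntIoi a ha (z + Δ) hz'
    have hdiffpos : 0 < ∫ v in Set.Ioi a, (g (z + Δ) v - Real.exp (-Δ / a) * g z v) := by
      refine pos_setIntegral measurableSet_Ioi ?_ (hint2.sub hint1) ?_
      · simp [Real.volume_Ioi]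
      · intro v hv
        have hv0 : 0 < v := ha.trans hv
        rw [hsplit z v hv0]
        have : Real.exp (-Δ / a) < Real.exp (-Δ / v) := by
          apply Real.exp_lt_exp.mpr
          rw [neg_div, neg_div, neg_lt_neg_iff]
          exact div_lt_div_of_pos_left hΔ ha hv
        nlinarith [hgpos z hz v hv0]
    rw [integral_sub hint2 hint1, integral_const_mul] at hdiffpos
    rw [hN z, hN (z + Δ)]
    linarith
  -- I (z+Δ) ≤ exp(-Δ/a) * I z
  have hIle : I (z + Δ) ≤ Real.exp (-Δ / a) * I z := by
    rw [hI_def]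
    simp only
    rw [← integral_const_mul]
    refine setIntegral_mono_on (hIntIoc (z + Δ) hz') ((hIntIoc z hz).const_mul _)
      measurableSet_Ioc ?_
    intro v hv
    have hv0 : 0 < v := hb.trans hv.1
    rw [hsplit z v hv0]
    have : Real.exp (-Δ / v) ≤ Real.exp (-Δ / a) := by
      apply Real.exp_le_exp.mpr
      rw [neg_div, neg_div, neg_le_neg_iff]
      exact div_le_div_of_nonneg_left hΔ.le hv0 hv.2
    nlinarith [hgpos z hz v hv0]
  -- conclude
  rw [hDsplit z hz, hDsplit (z + Δ) hz']
  have h1 : N z * I (z + Δ) ≤ N z * (Real.exp (-Δ / a) * I z) :=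
    mul_le_mul_of_nonneg_left hIle hNpos.le
  have h2 : N z * (Real.exp (-Δ / a) * I z) < N (z + Δ) * I z := by
    rw [← mul_assoc, mul_comm (N z) (Real.exp (-Δ / a))]
    exact mul_lt_mul_of_pos_right hkey hIpos
  nlinarith
end

section
/- Fix integers k ≥ 1 and M ≥ 1, and reals σ_w² > 0, ζ > 0, σ_a² > 0. For z ≥ 0 let Λ(z) = e^{σ_a²/ζ}·(∫_{σ_w²+σ_a²}^∞ v^{-k} e^{-z/v} e^{-v/ζ} dv)/(∫_{σ_w²}^∞ v^{-k} e^{-z/v} e^{-v/ζ} dv). Then the function Λ_M : [0,∞)^M → (0,∞) defined by Λ_M(z₁,…,z_M) = ∏_{m=1}^M Λ(z_m) is strictly increasing in each coordinate: if z and z' agree in all coordinates except the m-th and z_m < z'_m, then Λ_M(z) < Λ_M(z'). -/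
open MeasureTheory

namespace BlockFadingAux

set_option maxHeartbeats 1000000

/-- Positivity of an integral of a pointwise positive integrable function. -/
lemma pos_integral {s : Set ℝ} (hs : MeasurableSet s) (hμ : 0 < volume s)
    {f : ℝ → ℝ} (hint : IntegrableOn f s) (hf : ∀ v ∈ s, 0 < f v) :
    0 < ∫ v in s, f v := by
  rw [setIntegral_pos_iff_support_of_nonneg_ae ?_ hint]
  · refine lt_of_lt_of_le hμ (measure_mono fun v hv => ⟨(hf v hv).ne', hv⟩)
  · filter_upwards [ae_restrict_mem hs] with v hv using (hf v hv).le

lemma integrableOn_g (k : ℕ) {a z ζ : ℝ} (ha : 0 < a) (hz : 0 ≤ z) (hζ : 0 < ζ) :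
    IntegrableOn (fun v : ℝ => (v ^ k)⁻¹ * Real.exp (-z / v) * Real.exp (-v / ζ))
      (Set.Ioi a) := by
  have hcont : ContinuousOn
      (fun v : ℝ => (v ^ k)⁻¹ * Real.exp (-z / v) * Real.exp (-v / ζ)) (Set.Ioi a) := by
    have hne : ∀ v ∈ Set.Ioi a, v ≠ 0 := fun v hv => (ha.trans hv).ne'
    have h1 : ContinuousOn (fun v : ℝ => (v ^ k)⁻¹) (Set.Ioi a) :=
      (continuous_pow k).continuousOn.inv₀ fun v hv => pow_ne_zero k (hne v hv)
    have h2 : ContinuousOn (fun v : ℝ => Real.exp (-z / v)) (Set.Ioi a) :=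
      (continuousOn_const.div continuousOn_id hne).rexp
    have h3 : ContinuousOn (fun v : ℝ => Real.exp (-v / ζ)) (Set.Ioi a) :=
      (Real.continuous_exp.comp ((continuous_id.neg).div_const ζ)).continuousOn
    exact (h1.mul h2).mul h3
  refine Integrable.mono'
    ((exp_neg_integrableOn_Ioi a (b := ζ⁻¹) (by positivity)).const_mul ((a ^ k)⁻¹))
    (hcont.aestronglyMeasurable measurableSet_Ioi) ?_
  filter_upwards [ae_restrict_mem measurableSet_Ioi] with v hv
  have hva : a < v := hv
  have hv0 : 0 < v := ha.trans hva
  have e1 : (v ^ k)⁻¹ ≤ (a ^ k)⁻¹ := by gcongr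
  have e2 : Real.exp (-z / v) ≤ 1 := by
    rw [Real.exp_le_one_iff]
    exact div_nonpos_of_nonpos_of_nonneg (neg_nonpos.mpr hz) hv0.le
  have e3 : Real.exp (-v / ζ) = Real.exp (-ζ⁻¹ * v) := by ring_nf
  have h0 : 0 ≤ (v ^ k)⁻¹ * Real.exp (-z / v) * Real.exp (-v / ζ) := by positivity
  rw [Real.norm_of_nonneg h0, ← e3]
  calc (v ^ k)⁻¹ * Real.exp (-z / v) * Real.exp (-v / ζ)
      ≤ (a ^ k)⁻¹ * 1 * Real.exp (-v / ζ) := by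
        gcongr
      _ = (a ^ k)⁻¹ * Real.exp (-v / ζ) := by ring

/-- Single-block lemma: positivity and strict monotonicity of `Λ`. -/
lemma lambda_pos_strictMono
    (k : ℕ) (σw2 ζ σa2 : ℝ) (hσw2 : 0 < σw2) (hζ : 0 < ζ) (hσa2 : 0 < σa2)
    (Λ : ℝ → ℝ)
    (hΛ : ∀ z : ℝ, Λ z = Real.exp (σa2 / ζ) *
      (∫ v in Set.Ioi (σw2 + σa2),
        (v ^ k)⁻¹ * Real.exp (-z / v) * Real.exp (-v / ζ)) /
      (∫ v in Set.Ioi σw2,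
        (v ^ k)⁻¹ * Real.exp (-z / v) * Real.exp (-v / ζ))) :
    (∀ z : ℝ, 0 ≤ z → 0 < Λ z) ∧
    (∀ z z' : ℝ, 0 ≤ z → z < z' → Λ z < Λ z') := by
  set a := σw2 with ha_def
  set b := σw2 + σa2 with hb_def
  have ha : 0 < a := hσw2
  have hb : 0 < b := by positivity
  have hab : a < b := by simp [ha_def, hb_def, hσa2]
  set g : ℝ → ℝ → ℝ := fun z v => (v ^ k)⁻¹ * Real.exp (-z / v) * Real.exp (-v / ζ)
    with hg_def
  have hgpos : ∀ z v : ℝ, 0 < v → 0 < g z v := by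
    intro z v hv; simp only [hg_def]; positivity
  set N : ℝ → ℝ := fun z => ∫ v in Set.Ioi b, g z v with hN_def
  set A : ℝ → ℝ := fun z => ∫ v in Set.Ioc a b, g z v with hA_def
  set D : ℝ → ℝ := fun z => ∫ v in Set.Ioi a, g z v with hD_def
  have hintD : ∀ z : ℝ, 0 ≤ z → IntegrableOn (g z) (Set.Ioi a) :=
    fun z hz => integrableOn_g k ha hz hζ
  have hintN : ∀ z : ℝ, 0 ≤ z → IntegrableOn (g z) (Set.Ioi b) :=
    fun z hz => integrableOn_g k hb hz hζ
  have hintA : ∀ z : ℝ, 0 ≤ z → IntegrableOn (g z) (Set.Ioc a b) := fun z hz =>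
    (hintD z hz).mono_set Set.Ioc_subset_Ioi_self
  have hDsplit : ∀ z : ℝ, 0 ≤ z → D z = A z + N z := by
    intro z hz
    show (∫ v in Set.Ioi a, g z v)
      = (∫ v in Set.Ioc a b, g z v) + (∫ v in Set.Ioi b, g z v)
    rw [← Set.Ioc_union_Ioi_eq_Ioi hab.le,
      setIntegral_union (Set.Ioc_disjoint_Ioi le_rfl) measurableSet_Ioi
        (hintA z hz) (hintN z hz)]
  have hNpos : ∀ z : ℝ, 0 ≤ z → 0 < N z := fun z hz =>
    pos_integral measurableSet_Ioi (by simp) (hintN z hz)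
      (fun v hv => hgpos z v (hb.trans hv))
  have hApos : ∀ z : ℝ, 0 ≤ z → 0 < A z := fun z hz =>
    pos_integral measurableSet_Ioc (by simp [hab]) (hintA z hz)
      (fun v hv => hgpos z v (ha.trans hv.1))
  have hDpos : ∀ z : ℝ, 0 ≤ z → 0 < D z := by
    intro z hz; rw [hDsplit z hz]; exact add_pos (hApos z hz) (hNpos z hz)
  have hΛ' : ∀ z : ℝ, Λ z = Real.exp (σa2 / ζ) * N z / D z := fun z => hΛ z
  constructor
  · intro z hz
    rw [hΛ' z]
    have := hNpos z hz
    have := hDpos z hz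
    positivity
  · intro z z' hz hlt
    have hz' : 0 ≤ z' := hz.trans hlt.le
    set δ := z' - z with hδ_def
    have hδ : 0 < δ := by simp [hδ_def, hlt]
    set c := Real.exp (-δ / b) with hc_def
    have hc : 0 < c := Real.exp_pos _
    have hfact : ∀ v : ℝ, 0 < v → g z' v = Real.exp (-δ / v) * g z v := by
      intro v hv
      simp only [hg_def]
      rw [show (-z' / v) = (-δ / v) + (-z / v) by rw [← add_div, hδ_def]; ring_nf,
        Real.exp_add]
      ring
    -- A z' ≤ c * A z
    have key1 : A z' ≤ c * A z := by
      show (∫ v in Set.Ioc a b, g z' v) ≤ c * ∫ v in Set.Ioc a b, g z v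
      rw [← integral_const_mul]
      refine setIntegral_mono_on (hintA z' hz') ((hintA z hz).const_mul c)
        measurableSet_Ioc ?_
      intro v hv
      have hv0 : 0 < v := ha.trans hv.1
      rw [hfact v hv0]
      have : Real.exp (-δ / v) ≤ c := by
        rw [hc_def, Real.exp_le_exp, neg_div, neg_div, neg_le_neg_iff]
        exact div_le_div_of_nonneg_left hδ.le hv0 hv.2
      exact mul_le_mul_of_nonneg_right this (hgpos z v hv0).le
    -- c * N z < N z'
    have key2 : c * N z < N z' := by
      have hpos : 0 < ∫ v in Set.Ioi b, (g z' v - c * g z v) := by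
        refine pos_integral measurableSet_Ioi (by simp)
          ((hintN z' hz').sub ((hintN z hz).const_mul c)) ?_
        intro v hv
        have hv0 : 0 < v := hb.trans hv
        rw [hfact v hv0, ← sub_mul]
        refine mul_pos ?_ (hgpos z v hv0)
        rw [sub_pos, hc_def, Real.exp_lt_exp, neg_div, neg_div, neg_lt_neg_iff]
        gcongr
        exact hv
      rw [integral_sub (hintN z' hz') ((hintN z hz).const_mul c),
        integral_const_mul] at hpos
      linarith
    -- conclude
    have hNz := hNpos z hz
    have hNz' := hNpos z' hz'
    have hAz := hApos z hz
    have hDz := hDpos z hz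
    have hDz' := hDpos z' hz'
    rw [hΛ' z, hΛ' z', div_lt_div_iff₀ hDz hDz']
    have hE : 0 < Real.exp (σa2 / ζ) := Real.exp_pos _
    have hkey : N z * D z' < N z' * D z := by
      rw [hDsplit z hz, hDsplit z' hz']
      nlinarith [mul_le_mul_of_nonneg_left key1 hNz.le,
        mul_lt_mul_of_pos_right key2 hAz]
    nlinarith

end BlockFadingAux

/-- Lemma 4 (M > 1 block fading, AWGN Alice-to-Willie channel): the product
likelihood ratio `Λ_M(z₁,…,z_M) = ∏_m Λ(z_m)` is positive and strictly
increasing in each coordinate of the vector of per-block received powers. -/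
theorem product_likelihood_ratio_strict_mono_each_coordinate
    (k M : ℕ) (hk : 1 ≤ k) (hM : 1 ≤ M)
    (σw2 ζ σa2 : ℝ) (hσw2 : 0 < σw2) (hζ : 0 < ζ) (hσa2 : 0 < σa2)
    (Λ : ℝ → ℝ)
    (hΛ : ∀ z : ℝ, Λ z = Real.exp (σa2 / ζ) *
      (∫ v in Set.Ioi (σw2 + σa2),
        (v ^ k)⁻¹ * Real.exp (-z / v) * Real.exp (-v / ζ)) /
      (∫ v in Set.Ioi σw2,
        (v ^ k)⁻¹ * Real.exp (-z / v) * Real.exp (-v / ζ))) :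
    (∀ z : Fin M → ℝ, (∀ i, 0 ≤ z i) → 0 < ∏ i, Λ (z i)) ∧
    (∀ (z z' : Fin M → ℝ) (m : Fin M), (∀ i, 0 ≤ z i) → (∀ i, 0 ≤ z' i) →
      (∀ i, i ≠ m → z i = z' i) → z m < z' m →
      ∏ i, Λ (z i) < ∏ i, Λ (z' i)) := by
  obtain ⟨hpos, hmono⟩ :=
    BlockFadingAux.lambda_pos_strictMono k σw2 ζ σa2 hσw2 hζ hσa2 Λ hΛ
  constructor
  · intro z hz
    exact Finset.prod_pos fun i _ => hpos (z i) (hz i)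
  · intro z z' m hz hz' hag hlt
    rw [← Finset.mul_prod_erase Finset.univ (fun i => Λ (z i)) (Finset.mem_univ m),
      ← Finset.mul_prod_erase Finset.univ (fun i => Λ (z' i)) (Finset.mem_univ m)]
    have hrest : ∏ x ∈ Finset.univ.erase m, Λ (z x)
        = ∏ x ∈ Finset.univ.erase m, Λ (z' x) := by
      refine Finset.prod_congr rfl fun i hi => ?_
      rw [hag i (Finset.ne_of_mem_erase hi)]
    rw [hrest]
    have hrestpos : 0 < ∏ x ∈ Finset.univ.erase m, Λ (z' x) :=
      Finset.prod_pos fun i hi => hpos (z' i) (hz' i)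
    exact mul_lt_mul_of_pos_right (hmono (z m) (z' m) (hz m) hlt) hrestpos
end

section
/- Fix integers k ≥ 1 and M ≥ 1, and reals σ_w² > 0, ζ > 0, and positive shifts s₁,…,s_M > 0. For each m ∈ {1,…,M} and z ≥ 0 let Λ_m(z) = e^{s_m/ζ}·(∫_{σ_w²+s_m}^∞ v^{-k} e^{-z/v} e^{-v/ζ} dv)/(∫_{σ_w²}^∞ v^{-k} e^{-z/v} e^{-v/ζ} dv). Then the function (z₁,…,z_M) ↦ ∏_{m=1}^M Λ_m(z_m) on [0,∞)^M is strictly increasing in each coordinate. -/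
open MeasureTheory

open Set Real

private lemma aux_integrable (k : ℕ) {ζ a : ℝ} (z : ℝ) (hζ : 0 < ζ) (ha : 0 < a) (hz : 0 ≤ z) :
    IntegrableOn (fun v => (v ^ k)⁻¹ * Real.exp (-z / v) * Real.exp (-v / ζ)) (Ioi a) := by
  have hmeas : MeasurableSet (Ioi a) := measurableSet_Ioi
  have hcont : ContinuousOn (fun v => (v ^ k)⁻¹ * Real.exp (-z / v) * Real.exp (-v / ζ)) (Ioi a) := by
    apply ContinuousOn.mul
    · apply ContinuousOn.mul
      · exact (continuousOn_pow k).inv₀ fun v hv =>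
          pow_ne_zero _ (ne_of_gt (ha.trans hv))
      · exact Real.continuous_exp.comp_continuousOn
          (continuousOn_const.div continuousOn_id fun v hv => ne_of_gt (ha.trans hv))
    · exact (Real.continuous_exp.comp (continuous_id.neg.div_const ζ)).continuousOn
  have hint : Integrable (fun v : ℝ => (a ^ k)⁻¹ * Real.exp (-ζ⁻¹ * v))
      (volume.restrict (Ioi a)) :=
    (exp_neg_integrableOn_Ioi a (inv_pos.2 hζ)).const_mul _
  refine hint.mono' (hcont.aestronglyMeasurable hmeas) ?_
  filter_upwards [ae_restrict_mem hmeas] with v hv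
  have hva : a < v := hv
  have hv0 : 0 < v := ha.trans hva
  have h1 : (v ^ k)⁻¹ ≤ (a ^ k)⁻¹ := by
    apply inv_anti₀ (pow_pos ha k)
    exact pow_le_pow_left₀ ha.le hva.le k
  have h2 : Real.exp (-z / v) ≤ 1 := by
    rw [Real.exp_le_one_iff]
    exact div_nonpos_of_nonpos_of_nonneg (neg_nonpos.2 hz) hv0.le
  have h3 : Real.exp (-v / ζ) = Real.exp (-ζ⁻¹ * v) := by ring_nf
  rw [Real.norm_eq_abs, abs_of_nonneg (by positivity)]
  calc (v ^ k)⁻¹ * Real.exp (-z / v) * Real.exp (-v / ζ)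
      ≤ (a ^ k)⁻¹ * 1 * Real.exp (-v / ζ) := by
        apply mul_le_mul_of_nonneg_right _ (Real.exp_pos _).le
        exact mul_le_mul h1 h2 (Real.exp_pos _).le (by positivity)
    _ = (a ^ k)⁻¹ * Real.exp (-ζ⁻¹ * v) := by rw [h3]; ring

private lemma aux_pos {S : Set ℝ} (hS : MeasurableSet S) (hμ : 0 < volume S) (g : ℝ → ℝ)
    (hint : IntegrableOn g S) (hpos : ∀ v ∈ S, 0 < g v) : 0 < ∫ v in S, g v := by
  rw [setIntegral_pos_iff_support_of_nonneg_ae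
    ((ae_restrict_iff' hS).2 (Filter.Eventually.of_forall fun v hv => (hpos v hv).le)) hint]
  exact hμ.trans_le (measure_mono fun v hv => ⟨(hpos v hv).ne', hv⟩)

/-- strict monotonicity of a single likelihood ratio -/
private lemma lam_mono (k : ℕ) {σw2 ζ s : ℝ} (hσw2 : 0 < σw2) (hζ : 0 < ζ) (hs : 0 < s)
    {z z' : ℝ} (hz : 0 ≤ z) (hz' : 0 ≤ z') (hzz : z < z') :
    Real.exp (s / ζ) *
      (∫ v in Set.Ioi (σw2 + s), (v ^ k)⁻¹ * Real.exp (-z / v) * Real.exp (-v / ζ)) /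
      (∫ v in Set.Ioi σw2, (v ^ k)⁻¹ * Real.exp (-z / v) * Real.exp (-v / ζ)) <
    Real.exp (s / ζ) *
      (∫ v in Set.Ioi (σw2 + s), (v ^ k)⁻¹ * Real.exp (-z' / v) * Real.exp (-v / ζ)) /
      (∫ v in Set.Ioi σw2, (v ^ k)⁻¹ * Real.exp (-z' / v) * Real.exp (-v / ζ)) := by
  set a := σw2
  set b := σw2 + s with hb
  have hab : a < b := by show σw2 < σw2 + s; linarith
  have hb0 : 0 < b := hσw2.trans hab
  set f : ℝ → ℝ → ℝ := fun t v => (v ^ k)⁻¹ * Real.exp (-t / v) * Real.exp (-v / ζ) with hf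
  have hfpos : ∀ t v, 0 < v → 0 < f t v := fun t v hv => by positivity
  -- integrability
  have hIN : ∀ t : ℝ, 0 ≤ t → IntegrableOn (f t) (Ioi b) :=
    fun t ht => aux_integrable k t hζ hb0 ht
  have hID : ∀ t : ℝ, 0 ≤ t → IntegrableOn (f t) (Ioi a) :=
    fun t ht => aux_integrable k t hζ hσw2 ht
  have hIB : ∀ t : ℝ, 0 ≤ t → IntegrableOn (f t) (Ioc a b) :=
    fun t ht => (hID t ht).mono_set Ioc_subset_Ioi_self
  set N : ℝ → ℝ := fun t => ∫ v in Ioi b, f t v with hN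
  set B : ℝ → ℝ := fun t => ∫ v in Ioc a b, f t v with hB
  -- D t = B t + N t
  have hD : ∀ t : ℝ, 0 ≤ t → (∫ v in Ioi a, f t v) = B t + N t := by
    intro t ht
    rw [← Ioc_union_Ioi_eq_Ioi hab.le,
      setIntegral_union (Ioc_disjoint_Ioi le_rfl) measurableSet_Ioi (hIB t ht) (hIN t ht)]
  have hNpos : ∀ t : ℝ, 0 ≤ t → 0 < N t := fun t ht =>
    aux_pos measurableSet_Ioi (by simp) _ (hIN t ht)
      (fun v hv => hfpos t v (hb0.trans hv))
  have hBpos : ∀ t : ℝ, 0 ≤ t → 0 < B t := fun t ht =>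
    aux_pos measurableSet_Ioc (by simp [Real.volume_Ioc]; linarith) _ (hIB t ht)
      (fun v hv => hfpos t v (hσw2.trans hv.1))
  set δ := z' - z with hδ
  have hδ0 : 0 < δ := by simp [hδ]; linarith
  set c := Real.exp (-δ / b) with hc
  have hc0 : 0 < c := Real.exp_pos _
  -- pointwise factorization : f z' v = f z v * exp (-δ / v)
  have hfact : ∀ v : ℝ, 0 < v → f z' v = f z v * Real.exp (-δ / v) := by
    intro v hv
    have he : Real.exp (-z' / v) = Real.exp (-z / v) * Real.exp (-δ / v) := by
      rw [← Real.exp_add]; congr 1; field_simp; ring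
    simp only [hf]
    rw [he]; ring
  -- c * N z < N z'
  have hkey1 : c * N z < N z' := by
    have hsub : N z' - c * N z = ∫ v in Ioi b, (f z' v - c * f z v) := by
      rw [integral_sub (hIN z' hz') ((hIN z hz).const_mul c), integral_const_mul]
    have hpos : 0 < N z' - c * N z := by
      rw [hsub]
      apply aux_pos measurableSet_Ioi (by simp) (fun v => f z' v - c * f z v)
        ((hIN z' hz') |>.sub ((hIN z hz).const_mul c))
      intro v hv
      have hvb : b < v := hv
      have hv0 : 0 < v := hb0.trans hvb
      rw [hfact v hv0]
      have : c < Real.exp (-δ / v) := by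
        apply Real.exp_lt_exp.2
        rw [neg_div, neg_div, neg_lt_neg_iff]
        exact div_lt_div_of_pos_left hδ0 hb0 hvb
      nlinarith [hfpos z v hv0]
    linarith
  -- B z' ≤ c * B z
  have hkey2 : B z' ≤ c * B z := by
    have : B z' ≤ ∫ v in Ioc a b, c * f z v := by
      apply setIntegral_mono_on (hIB z' hz') ((hIB z hz).const_mul c) measurableSet_Ioc
      intro v hv
      have hv0 : 0 < v := hσw2.trans hv.1
      rw [hfact v hv0]
      have : Real.exp (-δ / v) ≤ c := by
        apply Real.exp_le_exp.2
        rw [neg_div, neg_div, neg_le_neg_iff]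
        exact div_le_div_of_nonneg_left hδ0.le hv0 hv.2
      nlinarith [hfpos z v hv0]
    calc B z' ≤ ∫ v in Ioc a b, c * f z v := this
      _ = c * B z := integral_const_mul c _
  -- conclude
  have hDz := hD z hz
  have hDz' := hD z' hz'
  rw [hDz, hDz', mul_div_assoc, mul_div_assoc]
  apply mul_lt_mul_of_pos_left _ (Real.exp_pos _)
  rw [div_lt_div_iff₀ (by linarith [hBpos z hz, hNpos z hz])
    (by linarith [hBpos z' hz', hNpos z' hz'])]
  have h1 : N z * B z' ≤ c * (N z * B z) := by nlinarith [(hNpos z hz)]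
  have h2 : c * (N z * B z) < N z' * B z := by nlinarith [hBpos z hz]
  nlinarith [mul_pos (hNpos z hz) (hNpos z' hz')]

private lemma lam_pos (k : ℕ) {σw2 ζ s : ℝ} (hσw2 : 0 < σw2) (hζ : 0 < ζ) (hs : 0 < s)
    {z : ℝ} (hz : 0 ≤ z) :
    0 < Real.exp (s / ζ) *
      (∫ v in Set.Ioi (σw2 + s), (v ^ k)⁻¹ * Real.exp (-z / v) * Real.exp (-v / ζ)) /
      (∫ v in Set.Ioi σw2, (v ^ k)⁻¹ * Real.exp (-z / v) * Real.exp (-v / ζ)) := by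
  have hb0 : 0 < σw2 + s := by linarith
  have hN : 0 < ∫ v in Set.Ioi (σw2 + s), (v ^ k)⁻¹ * Real.exp (-z / v) * Real.exp (-v / ζ) :=
    aux_pos measurableSet_Ioi (by simp) _ (aux_integrable k z hζ hb0 hz)
      (fun v hv => by have : 0 < v := hb0.trans hv; positivity)
  have hDpos : 0 < ∫ v in Set.Ioi σw2, (v ^ k)⁻¹ * Real.exp (-z / v) * Real.exp (-v / ζ) :=
    aux_pos measurableSet_Ioi (by simp) _ (aux_integrable k z hζ hσw2 hz)
      (fun v hv => by have : 0 < v := hσw2.trans hv; positivity)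
  positivity

/-- Corollary 4.1 (fading on both the jammer-to-Willie and Alice-to-Willie
channels, fading coefficients known to Willie): the product of
exponential-mixture likelihood ratios with block-dependent shifts `s m` is
strictly increasing in each coordinate of the per-block power vector. -/
theorem product_likelihood_ratio_shifts_strict_mono_each_coordinate
    (k M : ℕ) (hk : 1 ≤ k) (hM : 1 ≤ M)
    (σw2 ζ : ℝ) (hσw2 : 0 < σw2) (hζ : 0 < ζ)
    (s : Fin M → ℝ) (hs : ∀ m, 0 < s m)
    (Λ : Fin M → ℝ → ℝ)
    (hΛ : ∀ (m : Fin M) (z : ℝ), Λ m z = Real.exp (s m / ζ) *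
      (∫ v in Set.Ioi (σw2 + s m),
        (v ^ k)⁻¹ * Real.exp (-z / v) * Real.exp (-v / ζ)) /
      (∫ v in Set.Ioi σw2,
        (v ^ k)⁻¹ * Real.exp (-z / v) * Real.exp (-v / ζ))) :
    ∀ (z z' : Fin M → ℝ) (m : Fin M), (∀ i, 0 ≤ z i) → (∀ i, 0 ≤ z' i) →
      (∀ i, i ≠ m → z i = z' i) → z m < z' m →
      ∏ i, Λ i (z i) < ∏ i, Λ i (z' i) := by
  intro z z' m hz hz' heq hlt
  have hpos : ∀ i : Fin M, 0 < Λ i (z' i) := fun i => by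
    rw [hΛ]; exact lam_pos k hσw2 hζ (hs i) (hz' i)
  rw [← Finset.mul_prod_erase Finset.univ (fun i => Λ i (z i)) (Finset.mem_univ m),
    ← Finset.mul_prod_erase Finset.univ (fun i => Λ i (z' i)) (Finset.mem_univ m)]
  have hrest : ∏ i ∈ Finset.univ.erase m, Λ i (z i) =
      ∏ i ∈ Finset.univ.erase m, Λ i (z' i) :=
    Finset.prod_congr rfl fun i hi => by rw [heq i (Finset.ne_of_mem_erase hi)]
  rw [hrest]
  apply mul_lt_mul_of_pos_right
  · rw [hΛ, hΛ]
    exact lam_mono k hσw2 hζ (hs m) (hz m) (hz' m) hlt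
  · exact Finset.prod_pos fun i _ => hpos i
end

section
/- Fix integers k ≥ 1 and M ≥ 1, and reals σ_w² > 0, ζ > 0, σ_a² > 0, γ > 0. Let Λ(z) = e^{σ_a²/ζ}·(∫_{σ_w²+σ_a²}^∞ v^{-k} e^{-z/v} e^{-v/ζ} dv)/(∫_{σ_w²}^∞ v^{-k} e^{-z/v} e^{-v/ζ} dv) for z ≥ 0, define the boundary curve C = {x ∈ (0,∞)^M : ∏_{m=1}^M Λ(k·x_m) = γ} and, for δ > 0, the boundary region R_B^δ = {x ∈ ℝ^M : ∃ y ∈ C with max_{1≤m≤M} |x_m − y_m| < δ}. Let μ be the probability measure on ℝ with density f(t) = (1/ζ)e^{-(t−σ_w²)/ζ} for t ≥ σ_w² (and 0 otherwise), i.e., the law of σ_w² plus an Exponential random variable of mean ζ. Then the product measure satisfies μ^{⊗M}(R_B^δ) ≤ 2Mδ/ζ; in particular, for every ε > 0 there exists δ > 0, independent of k, such that μ^{⊗M}(R_B^δ) < ε. -/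
open MeasureTheory
open scoped ENNReal

section Aux

open Set Real

/-- Positivity of a set integral of a pointwise positive function on a set of
positive measure. -/
lemma aux_setIntegral_pos {g : ℝ → ℝ} {s : Set ℝ} (hs : MeasurableSet s)
    (hvol : 0 < volume s) (hint : IntegrableOn g s) (hpos : ∀ v ∈ s, 0 < g v) :
    0 < ∫ v in s, g v := by
  rw [setIntegral_pos_iff_support_of_nonneg_ae
    ((ae_restrict_iff' hs).2 (Filter.Eventually.of_forall fun v hv => (hpos v hv).le)) hint]
  exact lt_of_lt_of_le hvol (measure_mono fun v hv => ⟨ne_of_gt (hpos v hv), hv⟩)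

lemma aux_integrableOn (k : ℕ) {ζ a : ℝ} (hζ : 0 < ζ) (ha : 0 < a) (z : ℝ) :
    IntegrableOn (fun v : ℝ => (v ^ k)⁻¹ * Real.exp (-z / v) * Real.exp (-v / ζ))
      (Set.Ioi a) := by
  have hmeas : Measurable fun v : ℝ => (v ^ k)⁻¹ * Real.exp (-z / v) * Real.exp (-v / ζ) := by
    exact (((measurable_id.pow_const k).inv.mul
      (Real.measurable_exp.comp (measurable_const.div measurable_id))).mul
      (Real.measurable_exp.comp (measurable_id.neg.div_const ζ)))
  refine Integrable.mono'
    (g := fun v => ((a ^ k)⁻¹ * Real.exp (|z| / a)) * Real.exp (-ζ⁻¹ * v))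
    ((exp_neg_integrableOn_Ioi a (inv_pos.2 hζ)).const_mul _)
    hmeas.aestronglyMeasurable.restrict ?_
  refine (ae_restrict_iff' measurableSet_Ioi).2 (Filter.Eventually.of_forall fun v hv => ?_)
  have hv0 : 0 < v := ha.trans hv
  have h1 : (0:ℝ) ≤ (v ^ k)⁻¹ := inv_nonneg.2 (pow_nonneg hv0.le k)
  have h2 : (0:ℝ) ≤ (a ^ k)⁻¹ := inv_nonneg.2 (pow_nonneg ha.le k)
  rw [Real.norm_eq_abs, abs_of_nonneg
    (mul_nonneg (mul_nonneg h1 (Real.exp_pos _).le) (Real.exp_pos _).le)]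
  have e1 : (v ^ k)⁻¹ ≤ (a ^ k)⁻¹ := by gcongr; exact hv.le
  have e2 : Real.exp (-z / v) ≤ Real.exp (|z| / a) := by
    apply Real.exp_le_exp.2
    calc -z / v ≤ |z| / v := by gcongr; exact neg_le_abs z
      _ ≤ |z| / a := by gcongr; exact hv.le
  have e3 : Real.exp (-v / ζ) = Real.exp (-ζ⁻¹ * v) := by congr 1; ring
  rw [e3]
  exact mul_le_mul (mul_le_mul e1 e2 (Real.exp_pos _).le h2) le_rfl
    (Real.exp_pos _).le (mul_nonneg h2 (Real.exp_pos _).le)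

lemma aux_fpos (k : ℕ) {ζ : ℝ} (hζ : 0 < ζ) (z : ℝ) {v : ℝ} (hv : 0 < v) :
    0 < (v ^ k)⁻¹ * Real.exp (-z / v) * Real.exp (-v / ζ) :=
  mul_pos (mul_pos (inv_pos.2 (pow_pos hv k)) (Real.exp_pos _)) (Real.exp_pos _)

/-- The key monotone-likelihood-ratio inequality for the tail integrals. -/
lemma aux_key_mono (k : ℕ) {ζ b a z1 z2 : ℝ} (hζ : 0 < ζ) (hb : 0 < b) (hba : b < a)
    (hz : z1 < z2) :
    (∫ v in Set.Ioi a, (v ^ k)⁻¹ * Real.exp (-z1 / v) * Real.exp (-v / ζ)) *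
      (∫ v in Set.Ioi b, (v ^ k)⁻¹ * Real.exp (-z2 / v) * Real.exp (-v / ζ)) <
    (∫ v in Set.Ioi a, (v ^ k)⁻¹ * Real.exp (-z2 / v) * Real.exp (-v / ζ)) *
      (∫ v in Set.Ioi b, (v ^ k)⁻¹ * Real.exp (-z1 / v) * Real.exp (-v / ζ)) := by
  have ha : 0 < a := hb.trans hba
  set f : ℝ → ℝ → ℝ := fun z v => (v ^ k)⁻¹ * Real.exp (-z / v) * Real.exp (-v / ζ) with hf
  have hIa : ∀ z, IntegrableOn (f z) (Set.Ioi a) := fun z => aux_integrableOn k hζ ha z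
  have hIb : ∀ z, IntegrableOn (f z) (Set.Ioi b) := fun z => aux_integrableOn k hζ hb z
  have hJ : ∀ z, IntegrableOn (f z) (Set.Ioc b a) := fun z =>
    (hIb z).mono_set Set.Ioc_subset_Ioi_self
  have hsplit : ∀ z, ∫ v in Set.Ioi b, f z v =
      (∫ v in Set.Ioc b a, f z v) + ∫ v in Set.Ioi a, f z v := by
    intro z
    rw [← setIntegral_union (Set.Ioc_disjoint_Ioi le_rfl) measurableSet_Ioi (hJ z) (hIa z),
      Set.Ioc_union_Ioi_eq_Ioi hba.le]
  set c := Real.exp ((z2 - z1) / a) with hc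
  have hid : ∀ v : ℝ, 0 < v → f z1 v = Real.exp ((z2 - z1) / v) * f z2 v := by
    intro v hv
    have hexp : Real.exp (-z1 / v) = Real.exp ((z2 - z1) / v) * Real.exp (-z2 / v) := by
      rw [← Real.exp_add, ← add_div]
      congr 1; ring
    simp only [hf]
    rw [hexp]; ring
  -- strict inequality on Ioi a
  have h1 : (∫ v in Set.Ioi a, f z1 v) < c * ∫ v in Set.Ioi a, f z2 v := by
    have hint : IntegrableOn (fun v => c * f z2 v - f z1 v) (Set.Ioi a) :=
      ((hIa z2).const_mul c).sub (hIa z1)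
    have hposd : ∀ v ∈ Set.Ioi a, 0 < c * f z2 v - f z1 v := by
      intro v hv
      have hv0 : 0 < v := ha.trans hv
      have hlt : Real.exp ((z2 - z1) / v) < c :=
        Real.exp_lt_exp.2 (div_lt_div_of_pos_left (sub_pos.2 hz) ha hv)
      have hf2 : 0 < f z2 v := aux_fpos k hζ z2 hv0
      have := hid v hv0
      nlinarith [mul_lt_mul_of_pos_right hlt hf2]
    have h0 : 0 < ∫ v in Set.Ioi a, (c * f z2 v - f z1 v) :=
      aux_setIntegral_pos measurableSet_Ioi (by simp [Real.volume_Ioi]) hint hposd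
    rw [integral_sub ((hIa z2).const_mul c) (hIa z1), integral_const_mul] at h0
    linarith
  -- weak inequality on Ioc b a
  have h2 : c * (∫ v in Set.Ioc b a, f z2 v) ≤ ∫ v in Set.Ioc b a, f z1 v := by
    rw [← integral_const_mul]
    refine setIntegral_mono_on ((hJ z2).const_mul c) (hJ z1) measurableSet_Ioc ?_
    intro v hv
    have hv0 : 0 < v := hb.trans hv.1
    have hge : c ≤ Real.exp ((z2 - z1) / v) := by
      apply Real.exp_le_exp.2
      gcongr
      exact hv.2
    have hf2 : 0 < f z2 v := aux_fpos k hζ z2 hv0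
    have := hid v hv0
    nlinarith [mul_le_mul_of_nonneg_right hge hf2.le]
  have hPa2 : 0 < ∫ v in Set.Ioi a, f z2 v :=
    aux_setIntegral_pos measurableSet_Ioi (by simp [Real.volume_Ioi]) (hIa z2)
      (fun v hv => aux_fpos k hζ z2 (ha.trans hv))
  have hPJ2 : 0 < ∫ v in Set.Ioc b a, f z2 v :=
    aux_setIntegral_pos measurableSet_Ioc
      (by rw [Real.volume_Ioc]; exact ENNReal.ofReal_pos.2 (sub_pos.2 hba)) (hJ z2)
      (fun v hv => aux_fpos k hζ z2 (hb.trans hv.1))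
  have hmain : (∫ v in Set.Ioi a, f z1 v) * (∫ v in Set.Ioc b a, f z2 v) <
      (∫ v in Set.Ioi a, f z2 v) * (∫ v in Set.Ioc b a, f z1 v) := by
    calc (∫ v in Set.Ioi a, f z1 v) * (∫ v in Set.Ioc b a, f z2 v)
        < (c * ∫ v in Set.Ioi a, f z2 v) * (∫ v in Set.Ioc b a, f z2 v) :=
          mul_lt_mul_of_pos_right h1 hPJ2
      _ = (∫ v in Set.Ioi a, f z2 v) * (c * ∫ v in Set.Ioc b a, f z2 v) := by ring
      _ ≤ (∫ v in Set.Ioi a, f z2 v) * (∫ v in Set.Ioc b a, f z1 v) :=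
          mul_le_mul_of_nonneg_left h2 hPa2.le
  rw [hsplit z1, hsplit z2]
  nlinarith [hmain]

/-- Discrete intermediate value property along a chain. -/
lemma aux_discrete_ivt (G : ℕ → ℝ) (γ : ℝ) {M : ℕ} (hM : 1 ≤ M) (h0 : γ ≤ G 0)
    (hMle : G M ≤ γ) : ∃ m, m < M ∧ γ ≤ G m ∧ G (m + 1) ≤ γ := by
  by_contra h
  push_neg at h
  have key : ∀ i, i ≤ M → γ ≤ G i := by
    intro i
    induction i with
    | zero => exact fun _ => h0
    | succ j ih => intro hj; exact (h j (by omega) (ih (by omega))).le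
  have hlast := h (M - 1) (by omega) (key (M - 1) (by omega))
  rw [Nat.sub_add_cancel hM] at hlast
  linarith

end Aux

/-- Lemma 5: the probability (under the law of `σ_w²` plus i.i.d. exponential
jammer powers) of the coordinate-wise `δ`-thickening of the boundary curve of
Willie's optimal detector is at most `2Mδ/ζ`; in particular it can be made
arbitrarily small, uniformly in the per-block sample size `k`. -/
theorem boundary_region_probability_small
    (M : ℕ) (hM : 1 ≤ M)
    (σw2 ζ σa2 γ : ℝ) (hσw2 : 0 < σw2) (hζ : 0 < ζ) (hσa2 : 0 < σa2)
    (hγ : 0 < γ)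
    (Λ : ℕ → ℝ → ℝ)
    (hΛ : ∀ (k : ℕ) (z : ℝ), Λ k z = Real.exp (σa2 / ζ) *
      (∫ v in Set.Ioi (σw2 + σa2),
        (v ^ k)⁻¹ * Real.exp (-z / v) * Real.exp (-v / ζ)) /
      (∫ v in Set.Ioi σw2,
        (v ^ k)⁻¹ * Real.exp (-z / v) * Real.exp (-v / ζ)))
    (C : ℕ → Set (Fin M → ℝ))
    (hC : ∀ k : ℕ, C k =
      {x : Fin M → ℝ | (∀ m, 0 < x m) ∧ ∏ m, Λ k ((k : ℝ) * x m) = γ})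
    (R : ℕ → ℝ → Set (Fin M → ℝ))
    (hR : ∀ (k : ℕ) (δ : ℝ), R k δ =
      {x : Fin M → ℝ | ∃ y ∈ C k, ∀ m, |x m - y m| < δ})
    (μ : Measure ℝ)
    (hμ : μ = volume.withDensity fun t =>
      ENNReal.ofReal (if σw2 ≤ t then ζ⁻¹ * Real.exp (-(t - σw2) / ζ) else 0)) :
    (∀ k : ℕ, 1 ≤ k → ∀ δ : ℝ, 0 < δ →
      Measure.pi (fun _ : Fin M => μ) (R k δ)
        ≤ ENNReal.ofReal (2 * M * δ / ζ)) ∧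
    (∀ ε : ℝ, 0 < ε → ∃ δ : ℝ, 0 < δ ∧ ∀ k : ℕ, 1 ≤ k →
      Measure.pi (fun _ : Fin M => μ) (R k δ) < ENNReal.ofReal ε) := by
  obtain ⟨n, rfl⟩ : ∃ n, M = n + 1 := ⟨M - 1, by omega⟩
  -- μ is a probability measure
  have hprob : IsProbabilityMeasure μ := by
    constructor
    rw [hμ, withDensity_apply _ MeasurableSet.univ, Measure.restrict_univ]
    have hpdf : ∀ t : ℝ, ENNReal.ofReal
        (if σw2 ≤ t then ζ⁻¹ * Real.exp (-(t - σw2) / ζ) else 0) =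
        ProbabilityTheory.exponentialPDF ζ⁻¹ (t + -σw2) := by
      intro t
      rw [ProbabilityTheory.exponentialPDF_eq]
      congr 1
      by_cases h : σw2 ≤ t
      · rw [if_pos h, if_pos (by linarith)]
        congr 1
        ring
      · rw [if_neg h, if_neg (by intro hc; apply h; linarith)]
    simp_rw [hpdf]
    rw [lintegral_add_right_eq_self (ProbabilityTheory.exponentialPDF ζ⁻¹) (-σw2)]
    exact ProbabilityTheory.lintegral_exponentialPDF_eq_one (inv_pos.2 hζ)
  haveI := hprob
  -- density bound: μ of any measurable set is at most (1/ζ) times its volume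
  have hμle : ∀ s : Set ℝ, MeasurableSet s → μ s ≤ ENNReal.ofReal ζ⁻¹ * volume s := by
    intro s hs
    rw [hμ, withDensity_apply _ hs]
    calc ∫⁻ t in s, ENNReal.ofReal
          (if σw2 ≤ t then ζ⁻¹ * Real.exp (-(t - σw2) / ζ) else 0)
        ≤ ∫⁻ _ in s, ENNReal.ofReal ζ⁻¹ := by
          apply lintegral_mono
          intro t
          apply ENNReal.ofReal_le_ofReal
          by_cases h : σw2 ≤ t
          · rw [if_pos h]
            have hexp1 : Real.exp (-(t - σw2) / ζ) ≤ 1 := by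
              rw [Real.exp_le_one_iff]
              apply div_nonpos_of_nonpos_of_nonneg <;> linarith
            calc ζ⁻¹ * Real.exp (-(t - σw2) / ζ) ≤ ζ⁻¹ * 1 := by
                  apply mul_le_mul_of_nonneg_left hexp1 (inv_nonneg.2 hζ.le)
              _ = ζ⁻¹ := mul_one _
          · rw [if_neg h]; exact inv_nonneg.2 hζ.le
      _ = ENNReal.ofReal ζ⁻¹ * volume s := setLIntegral_const s _
  -- Part 1
  have hpart1 : ∀ k : ℕ, 1 ≤ k → ∀ δ : ℝ, 0 < δ →
      Measure.pi (fun _ : Fin (n + 1) => μ) (R k δ)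
        ≤ ENNReal.ofReal (2 * (n + 1 : ℕ) * δ / ζ) := by
    intro k hk δ hδ
    have hk0 : (0:ℝ) < (k : ℝ) := by exact_mod_cast hk
    have hba : σw2 < σw2 + σa2 := lt_add_of_pos_right _ hσa2
    have ha : 0 < σw2 + σa2 := hσw2.trans hba
    have hIb_pos : ∀ z : ℝ, 0 < ∫ v in Set.Ioi σw2,
        (v ^ k)⁻¹ * Real.exp (-z / v) * Real.exp (-v / ζ) := fun z =>
      aux_setIntegral_pos measurableSet_Ioi (by simp [Real.volume_Ioi])
        (aux_integrableOn k hζ hσw2 z) (fun v hv => aux_fpos k hζ z (hσw2.trans hv))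
    have hIa_pos : ∀ z : ℝ, 0 < ∫ v in Set.Ioi (σw2 + σa2),
        (v ^ k)⁻¹ * Real.exp (-z / v) * Real.exp (-v / ζ) := fun z =>
      aux_setIntegral_pos measurableSet_Ioi (by simp [Real.volume_Ioi])
        (aux_integrableOn k hζ ha z) (fun v hv => aux_fpos k hζ z (ha.trans hv))
    have hΛpos : ∀ z : ℝ, 0 < Λ k z := by
      intro z
      rw [hΛ]
      exact div_pos (mul_pos (Real.exp_pos _) (hIa_pos z)) (hIb_pos z)
    have hΛmono : StrictMono (Λ k) := by
      intro z1 z2 hz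
      rw [hΛ, hΛ, div_lt_div_iff₀ (hIb_pos z1) (hIb_pos z2)]
      have hkey := aux_key_mono k hζ hσw2 hba hz
      nlinarith [Real.exp_pos (σa2 / ζ), mul_lt_mul_of_pos_left hkey (Real.exp_pos (σa2 / ζ))]
    set φ : ℝ → ℝ := fun t => Λ k ((k : ℝ) * t) with hφdef
    have hφmono : StrictMono φ := fun t1 t2 h =>
      hΛmono (mul_lt_mul_of_pos_left h hk0)
    have hφpos : ∀ t, 0 < φ t := fun t => hΛpos _
    have hφmeas : Measurable φ := hφmono.monotone.measurable
    set ep : ℕ → Fin (n + 1) → ℝ := fun i j => if (j : ℕ) < i then -δ else δ with hep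
    set G : ℕ → (Fin (n + 1) → ℝ) → ℝ := fun i x => ∏ j, φ (x j + ep i j) with hG
    have hGmeas : ∀ i, Measurable (G i) := fun i =>
      Finset.measurable_prod _ fun j _ => hφmeas.comp ((measurable_pi_apply j).add_const _)
    set A : Fin (n + 1) → Set (Fin (n + 1) → ℝ) := fun m =>
      {x | γ ≤ G (m : ℕ) x ∧ G ((m : ℕ) + 1) x ≤ γ} with hA
    have hAmeas : ∀ m, MeasurableSet (A m) := fun m =>
      (measurableSet_le measurable_const (hGmeas _)).inter
        (measurableSet_le (hGmeas _) measurable_const)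
    -- the boundary region is covered by the sets A m
    have hsub : R k δ ⊆ ⋃ m, A m := by
      intro x hx
      rw [hR] at hx
      obtain ⟨y, hyC, hxy⟩ := hx
      rw [hC] at hyC
      obtain ⟨hypos, hyprod⟩ := hyC
      have hyφ : ∏ j, φ (y j) = γ := hyprod
      have h0 : γ ≤ G 0 x := by
        simp only [hG, hep, Nat.not_lt_zero, if_false]
        rw [← hyφ]
        apply Finset.prod_le_prod (fun j _ => (hφpos _).le)
        intro j _
        have hlt := (abs_lt.1 (hxy j)).1
        exact (hφmono.monotone (by linarith))
      have hMle : G (n + 1) x ≤ γ := by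
        simp only [hG, hep, Fin.is_lt, if_true]
        rw [← hyφ]
        apply Finset.prod_le_prod (fun j _ => (hφpos _).le)
        intro j _
        have hlt := (abs_lt.1 (hxy j)).2
        exact (hφmono.monotone (by linarith))
      obtain ⟨m, hmlt, hm1, hm2⟩ :=
        aux_discrete_ivt (fun i => G i x) γ (Nat.le_add_left 1 n) h0 hMle
      exact Set.mem_iUnion.2 ⟨⟨m, hmlt⟩, hm1, hm2⟩
    -- each A m has measure at most 2δ/ζ
    have hAm : ∀ m : Fin (n + 1),
        Measure.pi (fun _ : Fin (n + 1) => μ) (A m) ≤ ENNReal.ofReal (2 * δ / ζ) := by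
      intro m
      set e := MeasurableEquiv.piFinSuccAbove (fun _ : Fin (n + 1) => ℝ) m with he
      have hmp := measurePreserving_piFinSuccAbove (fun _ : Fin (n + 1) => μ) m
      have hpre := (hmp.symm e).measure_preimage (hAmeas m).nullMeasurableSet
      rw [← hpre, Measure.prod_apply_symm (e.symm.measurable (hAmeas m))]
      have hslice : ∀ y : Fin n → ℝ,
          μ ((fun t => (t, y)) ⁻¹' (e.symm ⁻¹' A m)) ≤ ENNReal.ofReal (2 * δ / ζ) := by
        intro y
        -- compute the slice set
        have hsymm : ∀ t : ℝ, e.symm (t, y) =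
            Fin.insertNth (α := fun _ : Fin (n + 1) => ℝ) m t y := by
          intro t
          simp [he, MeasurableEquiv.piFinSuccAbove_symm_apply, Fin.insertNthEquiv]
        have hins_same : ∀ t : ℝ, e.symm (t, y) m = t := by
          intro t
          rw [hsymm]
          exact Fin.insertNth_apply_same (α := fun _ : Fin (n + 1) => ℝ) m t y
        have hins_other : ∀ (t : ℝ) (j : Fin (n + 1)), j ≠ m →
            e.symm (t, y) j = e.symm (0, y) j := by
          intro t j hj
          obtain ⟨j', rfl⟩ := Fin.exists_succAbove_eq hj
          rw [hsymm, hsymm, Fin.insertNth_apply_succAbove, Fin.insertNth_apply_succAbove]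
        set c : ℝ := ∏ j ∈ Finset.univ.erase m, φ (e.symm (0, y) j + ep (m : ℕ) j) with hcdef
        have hdecomp : ∀ (i : ℕ) (t : ℝ), ep i m = ep (m : ℕ) m ∨ True →
            (∀ j ∈ Finset.univ.erase m, ep i j = ep (m : ℕ) j) →
            G i (e.symm (t, y)) = φ (t + ep i m) * c := by
          intro i t _ hepeq
          simp only [hG]
          rw [← Finset.mul_prod_erase _ _ (Finset.mem_univ m), hins_same]
          congr 1
          apply Finset.prod_congr rfl
          intro j hj
          rw [hins_other t j (Finset.ne_of_mem_erase hj), hepeq j hj]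
        have hepm : ep (m : ℕ) m = δ := by
          simp only [hep]; exact if_neg (lt_irrefl _)
        have hepm1 : ep ((m : ℕ) + 1) m = -δ := by
          simp only [hep]; exact if_pos (Nat.lt_succ_self _)
        have hepsame : ∀ j ∈ Finset.univ.erase m, ep ((m : ℕ) + 1) j = ep (m : ℕ) j := by
          intro j hj
          have hne : (j : ℕ) ≠ (m : ℕ) := fun hc =>
            (Finset.ne_of_mem_erase hj) (Fin.ext hc)
          simp only [hep]
          by_cases h : (j : ℕ) < (m : ℕ)
          · rw [if_pos (by omega), if_pos h]
          · rw [if_neg (by omega), if_neg h]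
        have hseq : ((fun t => (t, y)) ⁻¹' (e.symm ⁻¹' A m)) =
            {t : ℝ | γ ≤ φ (t + δ) * c ∧ φ (t + -δ) * c ≤ γ} := by
          ext t
          simp only [Set.mem_preimage, hA, Set.mem_setOf_eq]
          rw [hdecomp (m : ℕ) t (Or.inr trivial) (fun j _ => rfl),
            hdecomp ((m : ℕ) + 1) t (Or.inr trivial) hepsame, hepm, hepm1]
        rw [hseq]
        set S : Set ℝ := {t : ℝ | γ ≤ φ (t + δ) * c ∧ φ (t + -δ) * c ≤ γ} with hS
        rcases Set.eq_empty_or_nonempty S with hSe | ⟨t0, ht0⟩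
        · rw [hSe]; simp
        · have hcpos : 0 < c := by
            by_contra hcn
            push_neg at hcn
            have := ht0.1
            nlinarith [hφpos (t0 + δ)]
          have hdiam : ∀ t ∈ S, ∀ t' ∈ S, t ≤ t' + 2 * δ := by
            intro t ht t' ht'
            by_contra hcon
            push_neg at hcon
            have hstep : t' + δ < t + -δ := by linarith
            have hmlt := hφmono hstep
            have h1 := ht'.1
            have h2 := ht.2
            nlinarith
          have hbdd : BddBelow S := ⟨t0 - 2 * δ, fun t ht => by
            have := hdiam t0 ht0 t ht; linarith⟩
          have hsubIcc : S ⊆ Set.Icc (sInf S) (sInf S + 2 * δ) := by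
            intro t ht
            refine ⟨csInf_le hbdd ht, ?_⟩
            by_contra hcon
            push_neg at hcon
            obtain ⟨t', ht', hlt⟩ := (csInf_lt_iff hbdd ⟨t0, ht0⟩).1
              (by linarith : sInf S < t - 2 * δ)
            have := hdiam t ht t' ht'
            linarith
          calc μ S ≤ μ (Set.Icc (sInf S) (sInf S + 2 * δ)) := measure_mono hsubIcc
            _ ≤ ENNReal.ofReal ζ⁻¹ * volume (Set.Icc (sInf S) (sInf S + 2 * δ)) :=
                hμle _ measurableSet_Icc
            _ = ENNReal.ofReal ζ⁻¹ * ENNReal.ofReal (2 * δ) := by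
                rw [Real.volume_Icc]
                congr 1
                ring
            _ = ENNReal.ofReal (2 * δ / ζ) := by
                rw [← ENNReal.ofReal_mul (inv_nonneg.2 hζ.le)]
                congr 1
                ring
      calc (∫⁻ y, μ ((fun t => (t, y)) ⁻¹' (e.symm ⁻¹' A m))
            ∂(Measure.pi fun _ : Fin n => μ))
          ≤ ∫⁻ _, ENNReal.ofReal (2 * δ / ζ) ∂(Measure.pi fun _ : Fin n => μ) :=
            lintegral_mono hslice
        _ = ENNReal.ofReal (2 * δ / ζ) := by
            rw [lintegral_const, measure_univ, mul_one]
    -- combine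
    calc Measure.pi (fun _ : Fin (n + 1) => μ) (R k δ)
        ≤ Measure.pi (fun _ : Fin (n + 1) => μ) (⋃ m, A m) := measure_mono hsub
      _ ≤ ∑' m : Fin (n + 1), Measure.pi (fun _ : Fin (n + 1) => μ) (A m) :=
          measure_iUnion_le A
      _ ≤ ∑' _ : Fin (n + 1), ENNReal.ofReal (2 * δ / ζ) :=
          ENNReal.tsum_le_tsum fun m => hAm m
      _ = ((n + 1 : ℕ) : ℝ≥0∞) * ENNReal.ofReal (2 * δ / ζ) := by
          rw [tsum_fintype]
          simp [Finset.sum_const, Finset.card_univ, nsmul_eq_mul]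
      _ = ENNReal.ofReal (2 * (n + 1 : ℕ) * δ / ζ) := by
          rw [← ENNReal.ofReal_natCast (n + 1),
            ← ENNReal.ofReal_mul (Nat.cast_nonneg (n + 1))]
          congr 1
          push_cast
          ring
  refine ⟨hpart1, ?_⟩
  intro ε hε
  have hn1 : (0:ℝ) < (n : ℝ) + 1 := by positivity
  refine ⟨ζ * ε / (4 * ((n : ℝ) + 1)), by positivity, fun k hk => ?_⟩
  refine lt_of_le_of_lt (hpart1 k hk _ (by positivity)) ?_
  rw [ENNReal.ofReal_lt_ofReal_iff hε]
  have hkey : 2 * ((n : ℝ) + 1) * (ζ * ε / (4 * ((n : ℝ) + 1))) / ζ = ε / 2 := by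
    field_simp
    ring
  push_cast
  rw [hkey]
  linarith
end

section
/- Fix reals σ_w² > 0, ζ > 0 and ε ∈ (0,1), and set σ_a² = ζε/4. For each integer n ≥ 1 let G_n be a random variable with the Gamma(n,1) distribution (density t^{n−1}e^{−t}/(n−1)! on (0,∞)) and let U be uniform on [0,1], independent of G_n. Then there exists N such that for all n ≥ N and every threshold τ ∈ ℝ: P((σ_w² + ζU)·G_n/n ≥ τ) + P((σ_w² + ζU + σ_a²)·G_n/n < τ) > 1 − ε. -/
open MeasureTheory ProbabilityTheory

private lemma gammaPDFReal_rec (a : ℝ) (ha : 0 < a) (x : ℝ) :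
    x * gammaPDFReal a 1 x = a * gammaPDFReal (a+1) 1 x := by
  unfold gammaPDFReal
  rcases lt_trichotomy x 0 with hx|hx|hx
  · rw [if_neg (not_le.mpr hx), if_neg (not_le.mpr hx)]; ring
  · subst hx
    rw [if_pos le_rfl, if_pos le_rfl,
      Real.zero_rpow (by linarith : a + 1 - 1 ≠ 0)]
    ring
  · have h1 : (1:ℝ)^a = 1 := Real.one_rpow a
    have h2 : (1:ℝ)^(a+1) = 1 := Real.one_rpow _
    rw [if_pos hx.le, if_pos hx.le, h1, h2, Real.Gamma_add_one ha.ne']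
    have h3 : x ^ (a+1-1) = x ^ (a-1) * x := by
      rw [show a+1-1 = (a-1)+1 by ring, Real.rpow_add_one hx.ne']
    rw [h3]
    have hΓ : Real.Gamma a ≠ 0 := (Real.Gamma_pos_of_pos ha).ne'
    field_simp

lemma gamma_lintegral_sq (n : ℕ) (hn : 1 ≤ n) :
    ∫⁻ x, ENNReal.ofReal ((x - n)^2) ∂(gammaMeasure n 1) = ENNReal.ofReal n := by
  set a : ℝ := (n:ℝ) with ha_def
  have ha : 0 < a := Nat.cast_pos.mpr hn
  have ha1 : 0 < a + 1 := by linarith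
  have ha2 : 0 < a + 2 := by linarith
  have hrec1 : ∀ x, x * gammaPDFReal a 1 x = a * gammaPDFReal (a+1) 1 x :=
    gammaPDFReal_rec a ha
  have hrec2 : ∀ x, x * gammaPDFReal (a+1) 1 x = (a+1) * gammaPDFReal (a+2) 1 x := by
    intro x
    have := gammaPDFReal_rec (a+1) ha1 x
    rwa [show a+1+1 = a+2 by ring] at this
  -- real pointwise identity
  have hreal : ∀ x, (x-a)^2 * gammaPDFReal a 1 x + (2*a^2) * gammaPDFReal (a+1) 1 x
      = (a*(a+1)) * gammaPDFReal (a+2) 1 x + a^2 * gammaPDFReal a 1 x := by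
    intro x
    have e1 := hrec1 x
    have e2 := hrec2 x
    have e3 : x^2 * gammaPDFReal a 1 x = a*(a+1) * gammaPDFReal (a+2) 1 x := by
      calc x^2 * gammaPDFReal a 1 x = x * (x * gammaPDFReal a 1 x) := by ring
        _ = a * (x * gammaPDFReal (a+1) 1 x) := by rw [e1]; ring
        _ = a*(a+1) * gammaPDFReal (a+2) 1 x := by rw [e2]; ring
    nlinarith [e1, e3]
  -- ENNReal pointwise identity
  have hnn : ∀ b : ℝ, 0 < b → ∀ x, 0 ≤ gammaPDFReal b 1 x :=
    fun b hb x => gammaPDFReal_nonneg hb one_pos x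
  have hENN : ∀ x, gammaPDF a 1 x * ENNReal.ofReal ((x-a)^2)
        + ENNReal.ofReal (2*a^2) * gammaPDF (a+1) 1 x
      = ENNReal.ofReal (a*(a+1)) * gammaPDF (a+2) 1 x
        + ENNReal.ofReal (a^2) * gammaPDF a 1 x := by
    intro x
    simp only [gammaPDF]
    rw [← ENNReal.ofReal_mul (hnn a ha x), ← ENNReal.ofReal_mul (by positivity : (0:ℝ) ≤ 2*a^2),
      ← ENNReal.ofReal_mul (mul_nonneg ha.le ha1.le), ← ENNReal.ofReal_mul (sq_nonneg a),
      ← ENNReal.ofReal_add (mul_nonneg (hnn a ha x) (sq_nonneg _)) (mul_nonneg (by positivity) (hnn _ ha1 x)),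
      ← ENNReal.ofReal_add (mul_nonneg (mul_nonneg ha.le ha1.le) (hnn _ ha2 x)) (mul_nonneg (sq_nonneg a) (hnn _ ha x))]
    congr 1
    nlinarith [hreal x]
  have hmpdf : ∀ b : ℝ, Measurable (gammaPDF b 1) :=
    fun b => (measurable_gammaPDFReal b 1).ennreal_ofReal
  have hmf : Measurable (fun x : ℝ => ENNReal.ofReal ((x - a)^2)) :=
    ((measurable_id.sub_const a).pow_const 2).ennreal_ofReal
  have hs1 : ∫⁻ x, (gammaPDF a 1 x * ENNReal.ofReal ((x - a)^2)
        + ENNReal.ofReal (2*a^2) * gammaPDF (a+1) 1 x)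
      = (∫⁻ x, gammaPDF a 1 x * ENNReal.ofReal ((x - a)^2)) + ENNReal.ofReal (2*a^2) := by
    rw [lintegral_add_left (f := fun x => gammaPDF a 1 x * ENNReal.ofReal ((x - a)^2)) ((hmpdf a).mul hmf), lintegral_const_mul _ (hmpdf (a+1)),
      lintegral_gammaPDF_eq_one ha1 one_pos, mul_one]
  have hs2 : ∫⁻ x, (ENNReal.ofReal (a*(a+1)) * gammaPDF (a+2) 1 x
        + ENNReal.ofReal (a^2) * gammaPDF a 1 x)
      = ENNReal.ofReal (a*(a+1)) + ENNReal.ofReal (a^2) := by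
    rw [lintegral_add_left ((hmpdf (a+2)).const_mul _), lintegral_const_mul _ (hmpdf (a+2)),
      lintegral_const_mul _ (hmpdf a), lintegral_gammaPDF_eq_one ha2 one_pos,
      lintegral_gammaPDF_eq_one ha one_pos, mul_one, mul_one]
  have heq : (∫⁻ x, gammaPDF a 1 x * ENNReal.ofReal ((x - a)^2)) + ENNReal.ofReal (2*a^2)
      = ENNReal.ofReal (a*(a+1)) + ENNReal.ofReal (a^2) := by
    rw [← hs1, ← hs2]; exact lintegral_congr hENN
  have hr : ENNReal.ofReal (a*(a+1)) + ENNReal.ofReal (a^2)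
      = ENNReal.ofReal a + ENNReal.ofReal (2*a^2) := by
    rw [← ENNReal.ofReal_add (mul_nonneg ha.le ha1.le) (sq_nonneg a),
      ← ENNReal.ofReal_add ha.le (by positivity)]
    ring_nf
  rw [gammaMeasure, lintegral_withDensity_eq_lintegral_mul volume (hmpdf a) hmf]
  simp only [Pi.mul_apply]
  exact (ENNReal.add_left_inj ENNReal.ofReal_ne_top).mp (heq.trans hr)

lemma gamma_cheb (n : ℕ) (hn : 1 ≤ n) {δ : ℝ} (hδ : 0 < δ) :
    (gammaMeasure n 1) {x : ℝ | (n:ℝ)*δ ≤ |x - n|} ≤ ENNReal.ofReal (1/(n*δ^2)) := by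
  have hnR : (0:ℝ) < n := Nat.cast_pos.mpr hn
  have hεpos : (0:ℝ) < ((n:ℝ)*δ)^2 := by positivity
  have hsub : {x : ℝ | (n:ℝ)*δ ≤ |x - n|} ⊆
      {x : ℝ | ENNReal.ofReal (((n:ℝ)*δ)^2) ≤ ENNReal.ofReal ((x - (n:ℝ))^2)} := by
    intro x hx
    simp only [Set.mem_setOf_eq] at hx ⊢
    apply ENNReal.ofReal_le_ofReal
    have h2 := pow_le_pow_left₀ (by positivity) hx 2
    rwa [sq_abs] at h2
  have hmf : AEMeasurable (fun x : ℝ => ENNReal.ofReal ((x - (n:ℝ))^2)) (gammaMeasure n 1) :=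
    (((measurable_id.sub_const _).pow_const 2).ennreal_ofReal).aemeasurable
  calc (gammaMeasure n 1) {x : ℝ | (n:ℝ)*δ ≤ |x - n|}
      ≤ (gammaMeasure n 1) {x | ENNReal.ofReal (((n:ℝ)*δ)^2) ≤ ENNReal.ofReal ((x - (n:ℝ))^2)} :=
        measure_mono hsub
    _ ≤ (∫⁻ x, ENNReal.ofReal ((x - (n:ℝ))^2) ∂(gammaMeasure n 1))
          / ENNReal.ofReal (((n:ℝ)*δ)^2) :=
        meas_ge_le_lintegral_div hmf (ENNReal.ofReal_pos.mpr hεpos).ne' ENNReal.ofReal_ne_top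
    _ = ENNReal.ofReal (n:ℝ) / ENNReal.ofReal (((n:ℝ)*δ)^2) := by
        rw [gamma_lintegral_sq n hn]
    _ = ENNReal.ofReal ((n:ℝ) / ((n:ℝ)*δ)^2) := (ENNReal.ofReal_div_of_pos hεpos).symm
    _ = ENNReal.ofReal (1/(n*δ^2)) := by
        congr 1
        field_simp
set_option maxHeartbeats 1000000 in
/-- Analytical core of Theorem 1 (all-AWGN channels, jammer power uniform on
`[0, P_max]` per slot): with Alice's received power fixed at `σ_a² = ζε/4`,
every sequence of thresholds gives `P_FA + P_MD > 1 - ε` for `n` large. -/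
theorem awgn_covertness_core
    (σw2 ζ ε : ℝ) (hσw2 : 0 < σw2) (hζ : 0 < ζ) (hε : ε ∈ Set.Ioo (0:ℝ) 1)
    (Ω : Type*) [MeasureSpace Ω] [IsProbabilityMeasure (ℙ : Measure Ω)]
    (G : ℕ → Ω → ℝ) (U : Ω → ℝ)
    (hG_meas : ∀ n, Measurable (G n)) (hU_meas : Measurable U)
    (hG_law : ∀ n : ℕ, 1 ≤ n → Measure.map (G n) ℙ = gammaMeasure n 1)
    (hU_law : Measure.map U ℙ = volume.restrict (Set.Icc (0:ℝ) 1))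
    (hindep : ∀ n : ℕ, IndepFun (G n) U ℙ) :
    ∃ N : ℕ, ∀ n : ℕ, N ≤ n → ∀ τ : ℝ,
      (ℙ {ω : Ω | τ ≤ (σw2 + ζ * U ω) * G n ω / n}).toReal +
      (ℙ {ω : Ω | (σw2 + ζ * U ω + ζ * ε / 4) * G n ω / n < τ}).toReal
        > 1 - ε := by
  obtain ⟨hε0, hε1⟩ := hε
  have hc : 0 < ζ*ε/4 := by positivity
  obtain ⟨M₀, hM₀def⟩ : ∃ M : ℝ, M = σw2 + ζ + ζ*ε/4 := ⟨_, rfl⟩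
  have hM₀ : 0 < M₀ := by rw [hM₀def]; positivity
  obtain ⟨δ, hδ0, hδhalf, h16⟩ : ∃ δ : ℝ, 0 < δ ∧ δ ≤ 1/2 ∧ δ*(16*M₀) ≤ ζ*ε :=
    ⟨min (1/2) (ζ*ε/(16*M₀)), lt_min (by norm_num) (by positivity), min_le_left _ _, by
      rw [← le_div_iff₀ (by positivity)]
      exact min_le_right _ _⟩
  refine ⟨⌈2/(ε*δ^2)⌉₊ + 1, fun n hn τ => ?_⟩
  have hn1 : 1 ≤ n := le_trans (Nat.le_add_left 1 _) hn
  have hnR : (0:ℝ) < n := Nat.cast_pos.mpr hn1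
  have hcheb_num : 1/((n:ℝ)*δ^2) < ε/2 := by
    have h2 : 2/(ε*δ^2) < (n:ℝ) := by
      have hceil := Nat.le_ceil (2/(ε*δ^2))
      have hle : ((⌈2/(ε*δ^2)⌉₊ + 1 : ℕ) : ℝ) ≤ n := Nat.cast_le.mpr hn
      push_cast at hle
      linarith
    rw [div_lt_div_iff₀ (by positivity) two_pos]
    have h3 := (div_lt_iff₀ (by positivity : (0:ℝ) < ε*δ^2)).mp h2
    nlinarith
  have hXm : Measurable (fun ω => (σw2 + ζ * U ω) * G n ω / (n:ℝ)) :=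
    ((measurable_const.add (hU_meas.const_mul ζ)).mul (hG_meas n)).div_const _
  set Xlt := {ω : Ω | (σw2 + ζ * U ω) * G n ω / (n:ℝ) < τ} with hXltdef
  set D := {ω : Ω | (σw2 + ζ * U ω + ζ * ε / 4) * G n ω / (n:ℝ) < τ} with hDdef
  set E := {ω : Ω | (σw2 + ζ * U ω) * G n ω / (n:ℝ) < τ ∧
      τ ≤ (σw2 + ζ * U ω + ζ * ε / 4) * G n ω / (n:ℝ)} with hEdef
  have hXlt_m : MeasurableSet Xlt := measurableSet_lt hXm measurable_const
  have hAeq : {ω : Ω | τ ≤ (σw2 + ζ * U ω) * G n ω / (n:ℝ)} = Xltᶜ := by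
    ext ω
    simp only [hXltdef, Set.mem_setOf_eq, Set.mem_compl_iff, not_lt]
  set B := {ω : Ω | (n:ℝ)*δ ≤ |G n ω - n|} with hBdef
  have hS_m : MeasurableSet {x : ℝ | (n:ℝ)*δ ≤ |x - (n:ℝ)|} :=
    measurableSet_le measurable_const ((measurable_id.sub_const _).abs)
  have hB : ℙ B ≤ ENNReal.ofReal (1/((n:ℝ)*δ^2)) := by
    have hBpre : B = G n ⁻¹' {x : ℝ | (n:ℝ)*δ ≤ |x - (n:ℝ)|} := rfl
    rw [hBpre, ← Measure.map_apply (hG_meas n) hS_m, hG_law n hn1]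
    exact gamma_cheb n hn1 hδ0
  have hUout : ℙ {ω : Ω | U ω ∉ Set.Icc (0:ℝ) 1} = 0 := by
    have hpre : {ω : Ω | U ω ∉ Set.Icc (0:ℝ) 1} = U ⁻¹' (Set.Icc (0:ℝ) 1)ᶜ := rfl
    rw [hpre, ← Measure.map_apply hU_meas measurableSet_Icc.compl, hU_law,
      Measure.restrict_apply measurableSet_Icc.compl, Set.compl_inter_self, measure_empty]
  have hUJ : ∀ p q : ℝ, ℙ {ω : Ω | U ω ∈ Set.Ico p q} ≤ ENNReal.ofReal (q - p) := by
    intro p q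
    have hpre : {ω : Ω | U ω ∈ Set.Ico p q} = U ⁻¹' Set.Ico p q := rfl
    rw [hpre, ← Measure.map_apply hU_meas measurableSet_Ico, hU_law,
      Measure.restrict_apply measurableSet_Ico]
    calc volume (Set.Ico p q ∩ Set.Icc 0 1) ≤ volume (Set.Ico p q) :=
          measure_mono Set.inter_subset_left
      _ = ENNReal.ofReal (q - p) := Real.volume_Ico
  set a' : ℝ := (τ/(1+δ) - σw2 - ζ*ε/4)/ζ with ha'def
  set b' : ℝ := (τ/(1-δ) - σw2)/ζ with hb'def
  have h1δ : (0:ℝ) < 1 - δ := by linarith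
  have h1δ' : (0:ℝ) < 1 + δ := by linarith
  have key : ∀ ω ∈ E, ω ∉ B → U ω ∈ Set.Icc (0:ℝ) 1 →
      (0 < τ ∧ τ ≤ M₀*(1+δ)) ∧ U ω ∈ Set.Ico a' b' := by
    intro ω hω hBc hU
    obtain ⟨hX, hY⟩ := hω
    obtain ⟨hu0, hu1⟩ := hU
    obtain ⟨u, hu⟩ : ∃ u : ℝ, u = U ω := ⟨_, rfl⟩
    obtain ⟨g, hg⟩ : ∃ g : ℝ, g = G n ω := ⟨_, rfl⟩
    rw [← hu] at hu0 hu1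
    rw [← hu, ← hg] at hX hY
    have habs : |G n ω - (n:ℝ)| < (n:ℝ)*δ := not_le.mp hBc
    rw [← hg] at habs
    rw [abs_lt] at habs
    obtain ⟨habs1, habs2⟩ := habs
    have hg1 : (1-δ)*n < g := by nlinarith
    have hg2 : g < (1+δ)*n := by nlinarith
    have hgpos : 0 < g := lt_trans (mul_pos h1δ hnR) hg1
    have hsu : 0 < σw2 + ζ*u := by nlinarith [mul_nonneg hζ.le hu0]
    rw [div_lt_iff₀ hnR] at hX
    rw [le_div_iff₀ hnR] at hY
    have hτpos : 0 < τ := by nlinarith [mul_pos hsu hgpos]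
    have hcnn : 0 ≤ σw2 + ζ * u + ζ*ε/4 := by nlinarith [mul_nonneg hζ.le hu0]
    have hb1 : (σw2 + ζ*u + ζ*ε/4) * g ≤ (σw2 + ζ*u + ζ*ε/4) * ((1+δ)*n) :=
      mul_le_mul_of_nonneg_left hg2.le hcnn
    have hτM : τ ≤ M₀*(1+δ) := by
      have hb2 : (σw2 + ζ*u + ζ*ε/4) * ((1+δ)*n) ≤ M₀ * ((1+δ)*n) := by
        have hle : σw2 + ζ*u + ζ*ε/4 ≤ M₀ := by
          rw [hM₀def]; nlinarith [mul_le_mul_of_nonneg_left hu1 hζ.le]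
        exact mul_le_mul_of_nonneg_right hle (by positivity)
      have h5 : τ * (n:ℝ) ≤ (M₀*(1+δ)) * (n:ℝ) := by nlinarith [hY, hb1, hb2]
      exact le_of_mul_le_mul_right h5 hnR
    refine ⟨⟨hτpos, hτM⟩, ?_, ?_⟩
    · rw [ha'def, div_le_iff₀ hζ, ← hu]
      have hstep : τ ≤ (σw2 + ζ*u + ζ*ε/4) * (1+δ) := by nlinarith [hY, hb1, hnR]
      have h' : τ/(1+δ) ≤ σw2 + ζ*u + ζ*ε/4 := (div_le_iff₀ h1δ').mpr hstep
      linarith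
    · rw [hb'def, lt_div_iff₀ hζ, ← hu]
      have hstep : (σw2 + ζ*u) * (1-δ) < τ := by
        nlinarith [hX, mul_lt_mul_of_pos_left hg1 hsu, hnR]
      have h' : σw2 + ζ*u < τ/(1-δ) := (lt_div_iff₀ h1δ).mpr hstep
      linarith
  have hnn2 : (0:ℝ) ≤ 1/((n:ℝ)*δ^2) + ε/2 := by
    have h1 : (0:ℝ) ≤ 1/((n:ℝ)*δ^2) := by positivity
    linarith
  have hEbound : ℙ E ≤ ENNReal.ofReal (1/((n:ℝ)*δ^2) + ε/2) := by
    by_cases hτc : 0 < τ ∧ τ ≤ M₀*(1+δ)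
    · have hsub : E ⊆ (B ∪ {ω : Ω | U ω ∉ Set.Icc (0:ℝ) 1}) ∪
          {ω : Ω | U ω ∈ Set.Ico a' b'} := by
        intro ω hω
        by_cases hB' : ω ∈ B
        · exact Or.inl (Or.inl hB')
        by_cases hU' : U ω ∈ Set.Icc (0:ℝ) 1
        · exact Or.inr ((key ω hω hB' hU').2)
        · exact Or.inl (Or.inr hU')
      have hba : b' - a' ≤ ε/2 := by
        have hq : τ/(1-δ) - τ/(1+δ) ≤ ζ*ε/4 := by
          have hqe : τ/(1-δ) - τ/(1+δ) = τ*(2*δ)/((1-δ)*(1+δ)) := by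
            field_simp
            ring
          rw [hqe, div_le_iff₀ (by positivity)]
          have hA1 : τ*(2*δ) ≤ M₀*(1+δ)*(2*δ) :=
            mul_le_mul_of_nonneg_right hτc.2 (by positivity)
          have hA2 : M₀*(1+δ)*(2*δ) ≤ M₀*(3*δ) := by
            nlinarith [mul_le_mul_of_nonneg_left hδhalf (mul_nonneg hM₀.le hδ0.le)]
          have hA3 : M₀*(3*δ) ≤ 3*(ζ*ε)/16 := by nlinarith [h16]
          have hA4 : 3*(ζ*ε)/16 ≤ ζ*ε/4*((1-δ)*(1+δ)) := by
            have hδsq : δ*δ ≤ 1/4 := by nlinarith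
            have hmul : (ζ*ε)*(δ*δ) ≤ (ζ*ε)*(1/4) :=
              mul_le_mul_of_nonneg_left hδsq (mul_pos hζ hε0).le
            nlinarith
          linarith
        have hdiff : b' - a' = ((τ/(1-δ) - τ/(1+δ)) + ζ*ε/4)/ζ := by
          rw [hb'def, ha'def]; ring
        rw [hdiff, div_le_iff₀ hζ]
        nlinarith
      calc ℙ E ≤ ℙ ((B ∪ {ω : Ω | U ω ∉ Set.Icc (0:ℝ) 1}) ∪
            {ω : Ω | U ω ∈ Set.Ico a' b'}) := measure_mono hsub
        _ ≤ ℙ (B ∪ {ω : Ω | U ω ∉ Set.Icc (0:ℝ) 1}) +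
            ℙ {ω : Ω | U ω ∈ Set.Ico a' b'} := measure_union_le _ _
        _ ≤ (ℙ B + ℙ {ω : Ω | U ω ∉ Set.Icc (0:ℝ) 1}) +
            ℙ {ω : Ω | U ω ∈ Set.Ico a' b'} :=
              add_le_add_left (measure_union_le _ _) _
        _ ≤ (ENNReal.ofReal (1/((n:ℝ)*δ^2)) + 0) + ENNReal.ofReal (b' - a') :=
              add_le_add (add_le_add hB (le_of_eq hUout)) (hUJ a' b')
        _ ≤ ENNReal.ofReal (1/((n:ℝ)*δ^2)) + ENNReal.ofReal (ε/2) := by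
              rw [add_zero]
              exact add_le_add_right (ENNReal.ofReal_le_ofReal hba) _
        _ = ENNReal.ofReal (1/((n:ℝ)*δ^2) + ε/2) :=
              (ENNReal.ofReal_add (by positivity) (by linarith)).symm
    · have hsub : E ⊆ B ∪ {ω : Ω | U ω ∉ Set.Icc (0:ℝ) 1} := by
        intro ω hω
        by_cases hB' : ω ∈ B
        · exact Or.inl hB'
        by_cases hU' : U ω ∈ Set.Icc (0:ℝ) 1
        · exact absurd (key ω hω hB' hU').1 hτc
        · exact Or.inr hU'
      calc ℙ E ≤ ℙ B + ℙ {ω : Ω | U ω ∉ Set.Icc (0:ℝ) 1} :=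
            le_trans (measure_mono hsub) (measure_union_le _ _)
        _ ≤ ENNReal.ofReal (1/((n:ℝ)*δ^2)) + 0 := add_le_add hB (le_of_eq hUout)
        _ ≤ ENNReal.ofReal (1/((n:ℝ)*δ^2) + ε/2) := by
            rw [add_zero]
            exact ENNReal.ofReal_le_ofReal (by linarith)
  have hsplit : ℙ Xlt ≤ ℙ D + ℙ E := by
    refine le_trans (measure_mono ?_) (measure_union_le D E)
    intro ω hω
    rcases lt_or_ge ((σw2 + ζ * U ω + ζ * ε / 4) * G n ω / (n:ℝ)) τ with h|h
    · exact Or.inl h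
    · exact Or.inr ⟨hω, h⟩
  have hfinD : ℙ D ≠ ⊤ := measure_ne_top _ _
  have hfinE : ℙ E ≠ ⊤ := measure_ne_top _ _
  have h1 : (ℙ Xlt).toReal ≤ (ℙ D).toReal + (ℙ E).toReal := by
    rw [← ENNReal.toReal_add hfinD hfinE]
    exact ENNReal.toReal_mono (ENNReal.add_ne_top.mpr ⟨hfinD, hfinE⟩) hsplit
  have hEreal : (ℙ E).toReal < ε := by
    have hmono := ENNReal.toReal_mono ENNReal.ofReal_ne_top hEbound
    rw [ENNReal.toReal_ofReal hnn2] at hmono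
    linarith
  have hA : (ℙ {ω : Ω | τ ≤ (σw2 + ζ * U ω) * G n ω / (n:ℝ)}).toReal
      = 1 - (ℙ Xlt).toReal := by
    rw [hAeq, prob_compl_eq_one_sub hXlt_m,
      ENNReal.toReal_sub_of_le prob_le_one ENNReal.one_ne_top, ENNReal.toReal_one]
  rw [hA]
  linarith
end

section
/- Fix reals σ_w² > 0, ζ > 0 and ε ∈ (0,1). For each integer n ≥ 1 let G_n be a random variable with the Gamma(n,1) distribution (density t^{n−1}e^{−t}/(n−1)! on (0,∞)) and let E be an Exponential random variable with mean ζ, independent of G_n. Then there exists σ_a² > 0, not depending on n (one may take σ_a² = ζε/8), and an N such that for all n ≥ N and every threshold τ ∈ ℝ: P((σ_w² + E)·G_n/n ≥ τ) + P((σ_w² + E + σ_a²)·G_n/n < τ) > 1 − ε. -/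
open MeasureTheory ProbabilityTheory
open scoped ENNReal

lemma expMeasure_Ico_le {ζ : ℝ} (hζ : 0 < ζ) (a L : ℝ) (hL : 0 ≤ L) :
    expMeasure ζ⁻¹ (Set.Ico a (a + L)) ≤ ENNReal.ofReal (L / ζ) := by
  rw [expMeasure, gammaMeasure, withDensity_apply _ measurableSet_Ico]
  calc ∫⁻ x in Set.Ico a (a + L), gammaPDF 1 ζ⁻¹ x
      ≤ ∫⁻ _ in Set.Ico a (a + L), ENNReal.ofReal ζ⁻¹ := by
        refine setLIntegral_mono measurable_const (fun x _ => ?_)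
        rw [gammaPDF_eq]
        refine ENNReal.ofReal_le_ofReal ?_
        split_ifs with h
        · simp only [Real.Gamma_one, Real.rpow_one, sub_self, Real.rpow_zero, div_one, mul_one]
          nlinarith [Real.exp_le_one_iff.mpr (neg_nonpos.mpr (by positivity) : -(ζ⁻¹ * x) ≤ 0),
            Real.exp_pos (-(ζ⁻¹ * x)), inv_pos.mpr hζ]
        · positivity
    _ = ENNReal.ofReal ζ⁻¹ * volume (Set.Ico a (a + L)) := setLIntegral_const _ _
    _ = ENNReal.ofReal (L / ζ) := by
        rw [Real.volume_Ico, ← ENNReal.ofReal_mul (by positivity), add_sub_cancel_left]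
        congr 1
        field_simp

/-- Analytical core of Theorem 2 (M = 1 Rayleigh block fading on the
jammer-to-Willie channel): there is a transmit power `σ_a² > 0` not depending
on the blocklength `n` such that every sequence of thresholds gives
`P_FA + P_MD > 1 - ε` for `n` large. -/
theorem single_block_fading_covertness_core
    (σw2 ζ ε : ℝ) (hσw2 : 0 < σw2) (hζ : 0 < ζ) (hε : ε ∈ Set.Ioo (0:ℝ) 1)
    (Ω : Type*) [MeasureSpace Ω] [IsProbabilityMeasure (ℙ : Measure Ω)]
    (G : ℕ → Ω → ℝ) (E : Ω → ℝ)
    (hG_meas : ∀ n, Measurable (G n)) (hE_meas : Measurable E)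
    (hG_law : ∀ n : ℕ, 1 ≤ n → Measure.map (G n) ℙ = gammaMeasure n 1)
    (hE_law : Measure.map E ℙ = expMeasure ζ⁻¹)
    (hindep : ∀ n : ℕ, IndepFun (G n) E ℙ) :
    ∃ σa2 : ℝ, 0 < σa2 ∧ ∃ N : ℕ, ∀ n : ℕ, N ≤ n → ∀ τ : ℝ,
      (ℙ {ω : Ω | τ ≤ (σw2 + E ω) * G n ω / n}).toReal +
      (ℙ {ω : Ω | (σw2 + E ω + σa2) * G n ω / n < τ}).toReal
        > 1 - ε := by
  obtain ⟨hε0, hε1⟩ := hε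
  refine ⟨ζ * ε / 8, by positivity, 1, fun n hn τ => ?_⟩
  set σa2 : ℝ := ζ * ε / 8 with hσa2_def
  have hσa2 : 0 < σa2 := by positivity
  have hn0 : (0:ℝ) < n := by exact_mod_cast hn
  set A : Set Ω := {ω | τ ≤ (σw2 + E ω) * G n ω / n} with hA
  set B : Set Ω := {ω | (σw2 + E ω + σa2) * G n ω / n < τ} with hB
  set C : Set Ω := {ω | (σw2 + E ω) * G n ω / n < τ ∧
      τ ≤ (σw2 + E ω + σa2) * G n ω / n} with hC
  -- the three events cover everything
  have hcover : A ∪ B ∪ C = Set.univ := by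
    ext ω
    simp only [Set.mem_union, Set.mem_setOf_eq, Set.mem_univ, iff_true, hA, hB, hC]
    by_cases h1 : τ ≤ (σw2 + E ω) * G n ω / n
    · exact Or.inl (Or.inl h1)
    · by_cases h2 : τ ≤ (σw2 + E ω + σa2) * G n ω / n
      · exact Or.inr ⟨not_le.mp h1, h2⟩
      · exact Or.inl (Or.inr (not_le.mp h2))
  -- bound ℙ C
  have hpair : Measurable fun ω => (G n ω, E ω) := (hG_meas n).prodMk hE_meas
  set S : Set (ℝ × ℝ) := {p | (σw2 + p.2) * p.1 / n < τ ∧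
      τ ≤ (σw2 + p.2 + σa2) * p.1 / n} with hSdef
  have hS : MeasurableSet S := by
    apply MeasurableSet.inter
    · exact measurableSet_lt
        (((measurable_const.add measurable_snd).mul measurable_fst).div_const _)
        measurable_const
    · exact measurableSet_le measurable_const
        (((measurable_const.add measurable_snd).add measurable_const).mul measurable_fst
          |>.div_const _)
  have hCpre : C = (fun ω => (G n ω, E ω)) ⁻¹' S := rfl
  haveI : IsProbabilityMeasure (Measure.map (G n) ℙ) :=
    Measure.isProbabilityMeasure_map (hG_meas n).aemeasurable
  have hCbound : ℙ C ≤ ENNReal.ofReal (ε / 8) := by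
    rw [hCpre, ← Measure.map_apply hpair hS,
      (indepFun_iff_map_prod_eq_prod_map_map (hG_meas n).aemeasurable
        hE_meas.aemeasurable).mp (hindep n),
      Measure.prod_apply hS]
    have hsec : ∀ g : ℝ, (Measure.map E ℙ) (Prod.mk g ⁻¹' S) ≤ ENNReal.ofReal (ε / 8) := by
      intro g
      by_cases hg : 0 < g
      · have hsub : Prod.mk g ⁻¹' S ⊆
            Set.Ico (τ * n / g - σw2 - σa2) ((τ * n / g - σw2 - σa2) + σa2) := by
          rintro e ⟨h1, h2⟩
          simp only [Set.mem_Ico]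
          rw [div_lt_iff₀ hn0] at h1
          rw [le_div_iff₀ hn0] at h2
          have k1 : σw2 + e < τ * n / g := (lt_div_iff₀ hg).mpr h1
          have k2 : τ * n / g ≤ σw2 + e + σa2 := (div_le_iff₀ hg).mpr (by linarith)
          constructor <;> linarith
        calc (Measure.map E ℙ) (Prod.mk g ⁻¹' S) ≤ _ := measure_mono hsub
          _ ≤ ENNReal.ofReal (σa2 / ζ) := by
              rw [hE_law]; exact expMeasure_Ico_le hζ _ _ hσa2.le
          _ = ENNReal.ofReal (ε / 8) := by
              congr 1; rw [hσa2_def]; field_simp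
      · have hempty : Prod.mk g ⁻¹' S = ∅ := by
          ext e
          simp only [Set.mem_preimage, hSdef, Set.mem_setOf_eq, Set.mem_empty_iff_false,
            iff_false, not_and, not_le]
          intro h1
          rw [div_lt_iff₀ hn0] at h1
          rw [div_lt_iff₀ hn0]
          nlinarith [not_lt.mp hg]
        simp [hempty]
    refine le_trans (lintegral_mono hsec) ?_
    simp
  -- put things together
  have h1 : (1 : ℝ≥0∞) ≤ ℙ A + ℙ B + ℙ C := by
    calc (1 : ℝ≥0∞) = ℙ (A ∪ B ∪ C) := by rw [hcover, measure_univ]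
      _ ≤ ℙ (A ∪ B) + ℙ C := measure_union_le _ _
      _ ≤ ℙ A + ℙ B + ℙ C := add_le_add_left (measure_union_le _ _) _
  have hfin : ∀ s : Set Ω, ℙ s ≠ ⊤ := fun s => measure_ne_top _ _
  have h1' : 1 ≤ (ℙ A).toReal + (ℙ B).toReal + (ℙ C).toReal := by
    have := ENNReal.toReal_mono (by finiteness) h1
    rwa [ENNReal.toReal_one, ENNReal.toReal_add (by finiteness) (hfin C),
      ENNReal.toReal_add (hfin A) (hfin B)] at this
  have hc' : (ℙ C).toReal ≤ ε / 8 := by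
    have := ENNReal.toReal_mono ENNReal.ofReal_ne_top hCbound
    rwa [ENNReal.toReal_ofReal (by positivity)] at this
  linarith
end

section
/- Fix an integer M ≥ 1 and reals σ_w² > 0, ζ > 0, γ > 0, ε ∈ (0,1). For an integer k ≥ 1 and real σ_a² > 0, define Λ_{k,σ_a²}(z) = e^{σ_a²/ζ}·(∫_{σ_w²+σ_a²}^∞ v^{-k} e^{-z/v} e^{-v/ζ} dv)/(∫_{σ_w²}^∞ v^{-k} e^{-z/v} e^{-v/ζ} dv) for z ≥ 0. Let E₁,…,E_M be i.i.d. Exponential with mean ζ and G₁,…,G_M be i.i.d. with the Gamma(k,1) distribution, with all of these random variables mutually independent. Then there exists σ_a² > 0, not depending on k, and a K such that for all k ≥ K: P(∏_{m=1}^M Λ_{k,σ_a²}((σ_w² + E_m)·G_m) > γ) + P(∏_{m=1}^M Λ_{k,σ_a²}((σ_w² + E_m + σ_a²)·G_m) ≤ γ) > 1 − ε. -/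
open MeasureTheory ProbabilityTheory
open scoped ENNReal

set_option maxHeartbeats 1000000

section Helpers
open Real Set
set_option maxHeartbeats 1000000

lemma cov_meas (k : ℕ) (z ζ : ℝ) :
    Measurable fun v : ℝ => (v ^ k)⁻¹ * Real.exp (-z / v) * Real.exp (-v / ζ) :=
  (((measurable_id.pow_const k).inv.mul
    ((measurable_const.div measurable_id).exp)).mul
    ((measurable_id.neg.div_const ζ).exp))

lemma cov_integrableOn {a ζ : ℝ} (ha : 0 < a) (hζ : 0 < ζ) (k : ℕ) (z : ℝ) :
    IntegrableOn (fun v : ℝ => (v ^ k)⁻¹ * Real.exp (-z / v) * Real.exp (-v / ζ))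
      (Set.Ioi a) := by
  have hg : IntegrableOn
      (fun v : ℝ => ((a ^ k)⁻¹ * Real.exp (|z| / a)) * Real.exp (-(ζ⁻¹ * v)))
      (Set.Ioi a) :=
    by
      have h := exp_neg_integrableOn_Ioi a (inv_pos.mpr hζ)
      simp_rw [neg_mul] at h
      exact h.const_mul _
  refine hg.mono' ((cov_meas k z ζ).aestronglyMeasurable.restrict) ?_
  filter_upwards [ae_restrict_mem measurableSet_Ioi] with v hv
  have hav : a < v := hv
  have hv0 : (0:ℝ) < v := ha.trans hav
  have h1 : (v ^ k)⁻¹ ≤ (a ^ k)⁻¹ := by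
    apply inv_anti₀ (pow_pos ha k)
    exact pow_le_pow_left₀ ha.le hav.le k
  have h2 : Real.exp (-z / v) ≤ Real.exp (|z| / a) := by
    apply Real.exp_le_exp.mpr
    have : -z ≤ |z| := neg_le_abs z
    calc -z / v ≤ |z| / v := by gcongr
      _ ≤ |z| / a := by gcongr
  have h3 : -v / ζ = -(ζ⁻¹ * v) := by field_simp
  rw [Real.norm_eq_abs, abs_of_nonneg (by positivity), h3]
  gcongr

lemma cov_nonneg {a : ℝ} (ha : 0 < a) (k : ℕ) (z ζ : ℝ) :
    ∀ v ∈ Set.Ioi a, 0 ≤ (v ^ k)⁻¹ * Real.exp (-z / v) * Real.exp (-v / ζ) := by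
  intro v hv
  have hv0 : (0:ℝ) < v := ha.trans hv
  positivity


lemma lambda_bounds {a s ζ : ℝ} (ha : 0 < a) (hs : 0 ≤ s) (hζ : 0 < ζ) (k : ℕ) (z : ℝ) :
    0 ≤ Real.exp (s / ζ) *
        (∫ v in Set.Ioi (a + s), (v ^ k)⁻¹ * Real.exp (-z / v) * Real.exp (-v / ζ)) /
        (∫ v in Set.Ioi a, (v ^ k)⁻¹ * Real.exp (-z / v) * Real.exp (-v / ζ)) ∧
      Real.exp (s / ζ) *
        (∫ v in Set.Ioi (a + s), (v ^ k)⁻¹ * Real.exp (-z / v) * Real.exp (-v / ζ)) /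
        (∫ v in Set.Ioi a, (v ^ k)⁻¹ * Real.exp (-z / v) * Real.exp (-v / ζ)) ≤
        Real.exp (s / ζ) := by
  have has : 0 < a + s := by linarith
  set N := ∫ v in Set.Ioi (a + s), (v ^ k)⁻¹ * Real.exp (-z / v) * Real.exp (-v / ζ) with hNdef
  set D := ∫ v in Set.Ioi a, (v ^ k)⁻¹ * Real.exp (-z / v) * Real.exp (-v / ζ) with hDdef
  have hN : 0 ≤ N := setIntegral_nonneg measurableSet_Ioi (cov_nonneg has k z ζ)
  have hND : N ≤ D := by
    apply setIntegral_mono_set (cov_integrableOn ha hζ k z)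
    · exact (ae_restrict_mem measurableSet_Ioi).mono (fun v hv => cov_nonneg ha k z ζ v hv)
    · exact HasSubset.Subset.eventuallyLE (Set.Ioi_subset_Ioi (by linarith))
  have hD : 0 ≤ D := le_trans hN hND
  rcases eq_or_lt_of_le hD with h | h
  · have hN0 : N = 0 := le_antisymm (h ▸ hND) hN
    rw [hN0, ← h]
    simp [Real.exp_nonneg]
  · constructor
    · exact div_nonneg (mul_nonneg (Real.exp_pos _).le hN) hD
    · rw [div_le_iff₀ h]
      calc Real.exp (s / ζ) * N ≤ Real.exp (s / ζ) * D :=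
            mul_le_mul_of_nonneg_left hND (Real.exp_pos _).le
        _ = Real.exp (s / ζ) * D := rfl

lemma cov_exp_form {v : ℝ} (hv : 0 < v) (k : ℕ) (z : ℝ) :
    (v ^ k)⁻¹ * Real.exp (-z / v) = Real.exp (-((k : ℝ) * Real.log v + z / v)) := by
  have : (v ^ k : ℝ) = Real.exp ((k : ℝ) * Real.log v) := by
    rw [← Real.log_pow, Real.exp_log (pow_pos hv k)]
  rw [this, ← Real.exp_neg, ← Real.exp_add, neg_div]
  ring_nf

lemma cov_mono {p q z : ℝ} (k : ℕ) (hp : 0 < p) (hpq : p ≤ q) (hz : (k:ℝ) * q ≤ z) :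
    (p ^ k)⁻¹ * Real.exp (-z / p) ≤ (q ^ k)⁻¹ * Real.exp (-z / q) := by
  have hq : 0 < q := lt_of_lt_of_le hp hpq
  rw [cov_exp_form hp, cov_exp_form hq, Real.exp_le_exp, neg_le_neg_iff]
  have hL : (Real.log q - Real.log p) * p ≤ q - p := by
    have h := Real.log_le_sub_one_of_pos (div_pos hq hp)
    rw [Real.log_div hq.ne' hp.ne'] at h
    calc (Real.log q - Real.log p) * p ≤ (q / p - 1) * p :=
          mul_le_mul_of_nonneg_right h hp.le
      _ = q - p := by field_simp
  have key : (k:ℝ) * (Real.log q - Real.log p) * (p * q) ≤ z * q - z * p := by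
    calc (k:ℝ) * (Real.log q - Real.log p) * (p * q)
        = ((k:ℝ) * q) * ((Real.log q - Real.log p) * p) := by ring
      _ ≤ ((k:ℝ) * q) * (q - p) := by
          apply mul_le_mul_of_nonneg_left hL (by positivity)
      _ ≤ z * (q - p) := by
          apply mul_le_mul_of_nonneg_right hz (by linarith)
      _ = z * q - z * p := by ring
  have h2 : (k:ℝ) * (Real.log q - Real.log p) ≤ z / p - z / q := by
    rw [div_sub_div _ _ hp.ne' hq.ne', le_div_iff₀ (by positivity)]
    linarith
  linarith




lemma helperC {a b c2 ζ T : ℝ} (ha : 0 < a) (hab : a < b) (hbc : b < c2)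
    (hζ : 0 < ζ) (hT : 1 < T) :
    ∃ K : ℕ, 1 ≤ K ∧ ∀ k : ℕ, K ≤ k → ∀ z : ℝ, (k:ℝ) * c2 ≤ z →
      (0 < ∫ v in Set.Ioi b, (v ^ k)⁻¹ * Real.exp (-z / v) * Real.exp (-v / ζ)) ∧
      (∫ v in Set.Ioi a, (v ^ k)⁻¹ * Real.exp (-z / v) * Real.exp (-v / ζ)) <
        T * ∫ v in Set.Ioi b, (v ^ k)⁻¹ * Real.exp (-z / v) * Real.exp (-v / ζ) := by
  have hb : 0 < b := ha.trans hab
  set c1 : ℝ := (b + c2)/2 with hc1def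
  have hbc1 : b < c1 := by rw [hc1def]; linarith
  have hc1c2 : c1 < c2 := by rw [hc1def]; linarith
  have hc1 : 0 < c1 := hb.trans hbc1
  have hc2 : 0 < c2 := hc1.trans hc1c2
  set α : ℝ := c2 * (c1 - b) / (b * c1) - Real.log (c1 / b) with hαdef
  have hα : 0 < α := by
    have h1 : Real.log (c1 / b) ≤ (c1 - b) / b := by
      have h := Real.log_le_sub_one_of_pos (div_pos hc1 hb)
      calc Real.log (c1 / b) ≤ c1 / b - 1 := h
        _ = (c1 - b) / b := by field_simp
    have h2 : (c1 - b) / b < c2 * (c1 - b) / (b * c1) := by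
      rw [div_lt_div_iff₀ hb (by positivity)]
      nlinarith [mul_pos (mul_pos (sub_pos.mpr hbc1) hb) (sub_pos.mpr hc1c2)]
    rw [hαdef]; linarith
  set Q : ℝ := (b - a) * Real.exp (-a / ζ) with hQdef
  set R : ℝ := (T - 1) * ((c2 - c1) * Real.exp (-c2 / ζ)) with hRdef
  have hQ : 0 < Q := by
    have h1 : 0 < b - a := by linarith
    rw [hQdef]; positivity
  have hR : 0 < R := by
    have h1 : 0 < T - 1 := by linarith
    have h2 : 0 < c2 - c1 := by linarith
    rw [hRdef]; positivity
  refine ⟨max 1 (⌈Real.log (Q / R) / α⌉₊ + 1), le_max_left _ _, ?_⟩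
  intro k hk z hz
  have hk1 : 1 ≤ k := le_trans (le_max_left _ _) hk
  have hkc : Real.log (Q / R) < (k:ℝ) * α := by
    have h1 : Real.log (Q / R) / α < ((⌈Real.log (Q / R) / α⌉₊ : ℝ) + 1) := by
      have := Nat.le_ceil (Real.log (Q / R) / α)
      linarith
    have h2 : ((⌈Real.log (Q / R) / α⌉₊ : ℝ) + 1) ≤ (k : ℝ) := by
      have : (⌈Real.log (Q / R) / α⌉₊ + 1) ≤ k := le_trans (le_max_right _ _) hk
      exact_mod_cast this
    have h3 : Real.log (Q / R) / α < (k:ℝ) := lt_of_lt_of_le h1 h2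
    calc Real.log (Q / R) = Real.log (Q / R) / α * α := by field_simp
      _ < (k:ℝ) * α := by exact mul_lt_mul_of_pos_right h3 hα
  have hzc2 : (0:ℝ) ≤ z := by
    have : (1:ℝ) ≤ (k:ℝ) := by exact_mod_cast hk1
    nlinarith
  -- integrability
  have hIa := cov_integrableOn ha hζ k z
  have hIb := cov_integrableOn hb hζ k z
  have hIoc_ab : IntegrableOn
      (fun v : ℝ => (v ^ k)⁻¹ * Real.exp (-z / v) * Real.exp (-v / ζ)) (Ioc a b) :=
    hIa.mono_set Set.Ioc_subset_Ioi_self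
  have hIoc_c : IntegrableOn
      (fun v : ℝ => (v ^ k)⁻¹ * Real.exp (-z / v) * Real.exp (-v / ζ)) (Ioc c1 c2) :=
    hIb.mono_set (fun x hx => lt_trans hbc1 hx.1)
  -- lower bound on ∫_{Ioi b}
  set S : ℝ := (c1 ^ k)⁻¹ * Real.exp (-z / c1) * Real.exp (-c2 / ζ) with hSdef
  have hS : 0 < S := by rw [hSdef]; positivity
  have hlow : (c2 - c1) * S ≤
      ∫ v in Ioc c1 c2, (v ^ k)⁻¹ * Real.exp (-z / v) * Real.exp (-v / ζ) := by
    have hconst : ∫ _ in Ioc c1 c2, S = (c2 - c1) * S := by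
      rw [setIntegral_const, measureReal_def, Real.volume_Ioc, ENNReal.toReal_ofReal (by linarith), smul_eq_mul]
    rw [← hconst]
    apply setIntegral_mono_on ((integrableOn_const_iff).mpr (Or.inr (by
      rw [Real.volume_Ioc]; exact ENNReal.ofReal_lt_top))) hIoc_c measurableSet_Ioc
    intro v hv
    have hv1 : c1 < v := hv.1
    have hv2 : v ≤ c2 := hv.2
    have hv0 : 0 < v := hc1.trans hv1
    have hzv : (k:ℝ) * v ≤ z := by
      calc (k:ℝ) * v ≤ (k:ℝ) * c2 := by
            apply mul_le_mul_of_nonneg_left hv2 (Nat.cast_nonneg k)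
        _ ≤ z := hz
    rw [hSdef]
    exact mul_le_mul (cov_mono k hc1 hv1.le hzv)
      (Real.exp_le_exp.mpr (by rw [neg_div, neg_div, neg_le_neg_iff]; gcongr))
      (Real.exp_pos _).le
      (mul_nonneg (inv_nonneg.mpr (pow_nonneg hv0.le k)) (Real.exp_pos _).le)
  have hIb_low : (c2 - c1) * S ≤
      ∫ v in Set.Ioi b, (v ^ k)⁻¹ * Real.exp (-z / v) * Real.exp (-v / ζ) := by
    refine le_trans hlow (setIntegral_mono_set hIb ?_ ?_)
    · exact (ae_restrict_mem measurableSet_Ioi).mono (fun v hv => cov_nonneg hb k z ζ v hv)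
    · exact HasSubset.Subset.eventuallyLE (fun x hx => lt_trans hbc1 hx.1)
  have hIbpos : 0 < ∫ v in Set.Ioi b, (v ^ k)⁻¹ * Real.exp (-z / v) * Real.exp (-v / ζ) :=
    lt_of_lt_of_le (mul_pos (by linarith) hS) hIb_low
  refine ⟨hIbpos, ?_⟩
  -- upper bound on ∫_{Ioc a b}
  set B : ℝ := (b ^ k)⁻¹ * Real.exp (-z / b) * Real.exp (-a / ζ) with hBdef
  have hup : (∫ v in Ioc a b, (v ^ k)⁻¹ * Real.exp (-z / v) * Real.exp (-v / ζ))
      ≤ (b - a) * B := by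
    have hconst : ∫ _ in Ioc a b, B = (b - a) * B := by
      rw [setIntegral_const, measureReal_def, Real.volume_Ioc, ENNReal.toReal_ofReal (by linarith), smul_eq_mul]
    rw [← hconst]
    apply setIntegral_mono_on hIoc_ab ((integrableOn_const_iff).mpr (Or.inr (by
      rw [Real.volume_Ioc]; exact ENNReal.ofReal_lt_top))) measurableSet_Ioc
    intro v hv
    have hv1 : a < v := hv.1
    have hv2 : v ≤ b := hv.2
    have hzb : (k:ℝ) * b ≤ z := by
      calc (k:ℝ) * b ≤ (k:ℝ) * c2 := by
            apply mul_le_mul_of_nonneg_left hbc.le (Nat.cast_nonneg k)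
        _ ≤ z := hz
    rw [hBdef]
    exact mul_le_mul (cov_mono k (ha.trans hv1) hv2 hzb)
      (Real.exp_le_exp.mpr (by rw [neg_div, neg_div, neg_le_neg_iff]; gcongr))
      (Real.exp_pos _).le
      (mul_nonneg (inv_nonneg.mpr (pow_nonneg hb.le k)) (Real.exp_pos _).le)
  -- step 4 : (b-a)*B < (T-1)*((c2-c1)*S)
  have hstep4 : (b - a) * B < (T - 1) * ((c2 - c1) * S) := by
    have hBA : (b - a) * B = Q * ((b ^ k)⁻¹ * Real.exp (-z / b)) := by
      rw [hBdef, hQdef]; ring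
    have hSA : (T - 1) * ((c2 - c1) * S) = R * ((c1 ^ k)⁻¹ * Real.exp (-z / c1)) := by
      rw [hSdef, hRdef]; ring
    rw [hBA, hSA, cov_exp_form hb, cov_exp_form hc1]
    set A1 : ℝ := -((k : ℝ) * Real.log b + z / b) with hA1
    set A2 : ℝ := -((k : ℝ) * Real.log c1 + z / c1) with hA2
    have hdiff : (k:ℝ) * α ≤ A2 - A1 := by
      rw [hA1, hA2, hαdef]
      have hlog : Real.log (c1 / b) = Real.log c1 - Real.log b :=
        Real.log_div hc1.ne' hb.ne'
      have hzz : (k:ℝ) * (c2 * (c1 - b) / (b * c1)) ≤ z / b - z / c1 := by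
        rw [div_sub_div _ _ hb.ne' hc1.ne', le_div_iff₀ (by positivity)]
        have : z * c1 - b * z = z * (c1 - b) := by ring
        rw [this]
        calc (k:ℝ) * (c2 * (c1 - b) / (b * c1)) * (b * c1)
            = ((k:ℝ) * c2) * (c1 - b) := by field_simp
          _ ≤ z * (c1 - b) := by
              apply mul_le_mul_of_nonneg_right hz (by linarith)
      rw [hlog]
      ring_nf
      ring_nf at hzz
      linarith
    have hkey : Q / R < Real.exp (A2 - A1) := by
      rcases le_or_gt (Q / R) 0 with h | h
      · exact lt_of_le_of_lt h (Real.exp_pos _)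
      · rw [← Real.exp_log h]
        apply Real.exp_lt_exp.mpr
        exact lt_of_lt_of_le hkc hdiff
    have := (div_lt_iff₀ hR).mp hkey
    calc Q * Real.exp A1 < Real.exp (A2 - A1) * R * Real.exp A1 := by
          apply mul_lt_mul_of_pos_right this (Real.exp_pos _)
      _ = R * (Real.exp (A2 - A1) * Real.exp A1) := by ring
      _ = R * Real.exp A2 := by rw [← Real.exp_add]; ring_nf
  -- combine
  have hsplit : (∫ v in Set.Ioi a, (v ^ k)⁻¹ * Real.exp (-z / v) * Real.exp (-v / ζ))
      = (∫ v in Ioc a b, (v ^ k)⁻¹ * Real.exp (-z / v) * Real.exp (-v / ζ))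
      + ∫ v in Set.Ioi b, (v ^ k)⁻¹ * Real.exp (-z / v) * Real.exp (-v / ζ) := by
    rw [← setIntegral_union (Set.Ioc_disjoint_Ioi le_rfl) measurableSet_Ioi hIoc_ab hIb,
      Set.Ioc_union_Ioi_eq_Ioi hab.le]
  have hTm : (T - 1) * ((c2 - c1) * S) ≤ (T - 1) *
      ∫ v in Set.Ioi b, (v ^ k)⁻¹ * Real.exp (-z / v) * Real.exp (-v / ζ) := by
    apply mul_le_mul_of_nonneg_left hIb_low (by linarith)
  rw [hsplit]
  nlinarith [hIbpos]


lemma gammaPDF_shift {c : ℝ} (hc : 1 ≤ c) (x : ℝ) :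
    ENNReal.ofReal x * gammaPDF c 1 x =
      (ENNReal.ofReal c) * gammaPDF (c + 1) 1 x := by
  have hjpos : (0:ℝ) < c := by linarith
  have hj0 : c ≠ 0 := hjpos.ne'
  rcases lt_trichotomy x 0 with hx | hx | hx
  · rw [gammaPDF_of_neg hx, gammaPDF_of_neg hx, mul_zero, mul_zero]
  · subst hx
    simp only [ENNReal.ofReal_zero, zero_mul]
    rw [gammaPDF_of_nonneg le_rfl,
      show (c + 1 - 1) = c by ring, Real.zero_rpow hj0]
    simp
  · rw [gammaPDF_of_nonneg hx.le, gammaPDF_of_nonneg hx.le,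
      ← ENNReal.ofReal_mul hx.le, ← ENNReal.ofReal_mul (by positivity)]
    congr 1
    have hΓ : Real.Gamma (c + 1) = c * Real.Gamma c := Real.Gamma_add_one hj0
    have hΓpos : 0 < Real.Gamma c := Real.Gamma_pos_of_pos hjpos
    have hxj : x * x ^ (c - 1) = x ^ (c + 1 - 1) := by
      rw [show (c + 1 - 1) = 1 + (c - 1) by ring, Real.rpow_add hx, Real.rpow_one]
    rw [Real.one_rpow, Real.one_rpow, hΓ, show (c + 1 - 1) = c by ring] at *
    rw [← hxj]
    field_simp

lemma gammaPDF_measurable (c : ℝ) : Measurable (gammaPDF c 1) :=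
  (measurable_gammaPDFReal c 1).ennreal_ofReal

lemma gamma_moment1 {c : ℝ} (hc : 1 ≤ c) :
    ∫⁻ x : ℝ, ENNReal.ofReal x * gammaPDF c 1 x = ENNReal.ofReal c := by
  simp_rw [gammaPDF_shift hc]
  rw [lintegral_const_mul _ (gammaPDF_measurable _)]
  rw [lintegral_gammaPDF_eq_one (by linarith) one_pos, mul_one]

lemma gamma_moment2 {c : ℝ} (hc : 1 ≤ c) :
    ∫⁻ x : ℝ, ENNReal.ofReal (x ^ 2) * gammaPDF c 1 x =
      ENNReal.ofReal c * ENNReal.ofReal (c + 1) := by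
  have key : ∀ x : ℝ, ENNReal.ofReal (x ^ 2) * gammaPDF c 1 x =
      ENNReal.ofReal x * (ENNReal.ofReal x * gammaPDF c 1 x) := by
    intro x
    rcases lt_or_ge x 0 with hx | hx
    · rw [gammaPDF_of_neg hx, mul_zero, mul_zero, mul_zero]
    · rw [← mul_assoc, ← ENNReal.ofReal_mul hx, ← sq]
  have key2 : ∀ x : ℝ, ENNReal.ofReal (x ^ 2) * gammaPDF c 1 x =
      ENNReal.ofReal c * (ENNReal.ofReal x * gammaPDF (c + 1) 1 x) := by
    intro x
    rw [key x, gammaPDF_shift hc x, mul_left_comm]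
  simp_rw [key2, gammaPDF_shift (show (1:ℝ) ≤ c + 1 by linarith)]
  rw [lintegral_const_mul _ ((gammaPDF_measurable _).const_mul _),
    lintegral_const_mul _ (gammaPDF_measurable _)]
  rw [lintegral_gammaPDF_eq_one (by linarith) one_pos, mul_one]

lemma gamma_var (j : ℕ) (hj : 1 ≤ j) :
    ∫⁻ x : ℝ, ENNReal.ofReal ((x - (j:ℝ)) ^ 2) * gammaPDF (j : ℝ) 1 x =
      ENNReal.ofReal (j : ℝ) := by
  have key : ∀ x : ℝ,
      ENNReal.ofReal ((x - (j:ℝ)) ^ 2) * gammaPDF (j : ℝ) 1 x +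
        ENNReal.ofReal (2 * (j:ℝ)) * (ENNReal.ofReal x * gammaPDF (j : ℝ) 1 x) =
      ENNReal.ofReal (x ^ 2) * gammaPDF (j : ℝ) 1 x +
        ENNReal.ofReal ((j:ℝ) ^ 2) * gammaPDF (j : ℝ) 1 x := by
    intro x
    rcases lt_or_ge x 0 with hx | hx
    · rw [gammaPDF_of_neg hx]; simp
    · have hp : 0 ≤ gammaPDFReal (j:ℝ) 1 x := gammaPDFReal_nonneg (by positivity) one_pos x
      have hP : gammaPDF (j:ℝ) 1 x = ENNReal.ofReal (gammaPDFReal (j:ℝ) 1 x) := rfl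
      rw [hP, ← ENNReal.ofReal_mul (by positivity), ← ENNReal.ofReal_mul hx,
        ← ENNReal.ofReal_mul (by positivity), ← ENNReal.ofReal_mul (by positivity),
        ← ENNReal.ofReal_mul (by positivity), ← ENNReal.ofReal_add (by positivity) (by positivity),
        ← ENNReal.ofReal_add (by positivity) (by positivity)]
      congr 1
      ring
  have hc' : (1:ℝ) ≤ (j:ℝ) := by exact_mod_cast hj
  have hmeas1 : Measurable fun x : ℝ => ENNReal.ofReal ((x - (j:ℝ)) ^ 2) * gammaPDF (j:ℝ) 1 x :=
    ((show Measurable fun x : ℝ => (x - (j:ℝ)) ^ 2 by fun_prop).ennreal_ofReal).mul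
      (gammaPDF_measurable _)
  have hmeas2 : Measurable fun x : ℝ => ENNReal.ofReal x * gammaPDF (j:ℝ) 1 x :=
    (measurable_id.ennreal_ofReal).mul (gammaPDF_measurable _)
  have hsum := congrArg (fun f => ∫⁻ x : ℝ, f x)
    (funext key)
  simp only at hsum
  rw [lintegral_add_left hmeas1, lintegral_add_left
      (show Measurable fun x : ℝ => ENNReal.ofReal (x ^ 2) * gammaPDF (j:ℝ) 1 x from
      (((show Measurable fun x : ℝ => x ^ 2 by fun_prop).ennreal_ofReal).mul
        (gammaPDF_measurable _))),
    lintegral_const_mul _ hmeas2, lintegral_const_mul _ (gammaPDF_measurable _),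
    gamma_moment1 hc', gamma_moment2 hc',
    lintegral_gammaPDF_eq_one (by positivity) one_pos, mul_one] at hsum
  have hfin : ENNReal.ofReal (2 * (j:ℝ)) * ENNReal.ofReal (j:ℝ) ≠ ⊤ :=
    ENNReal.mul_ne_top ENNReal.ofReal_ne_top ENNReal.ofReal_ne_top
  have hrhs : ENNReal.ofReal (j:ℝ) * ENNReal.ofReal ((j:ℝ) + 1) + ENNReal.ofReal ((j:ℝ)^2) =
      ENNReal.ofReal (j:ℝ) + ENNReal.ofReal (2 * (j:ℝ)) * ENNReal.ofReal (j:ℝ) := by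
    rw [← ENNReal.ofReal_mul (by positivity), ← ENNReal.ofReal_mul (by positivity),
      ← ENNReal.ofReal_add (by positivity) (by positivity),
      ← ENNReal.ofReal_add (by positivity) (by positivity)]
    congr 1
    ring
  rw [hrhs] at hsum
  have h2 := ENNReal.eq_sub_of_add_eq hfin hsum
  rwa [ENNReal.add_sub_cancel_right hfin] at h2

lemma gamma_tail (j : ℕ) (hj : 1 ≤ j) {η : ℝ} (hη : 0 < η) (hη1 : η < 1) :
    gammaMeasure (j:ℝ) 1 {x : ℝ | x < (1 - η) * j} ≤ ENNReal.ofReal (1 / (η^2 * j)) := by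
  have hjpos : (0:ℝ) < j := by exact_mod_cast Nat.lt_of_lt_of_le Nat.zero_lt_one hj
  have hmeasf : Measurable fun x : ℝ => ENNReal.ofReal ((x - (j:ℝ)) ^ 2) :=
    ((measurable_id.sub_const _).pow_const 2).ennreal_ofReal
  have hsub : {x : ℝ | x < (1 - η) * j} ⊆
      {x : ℝ | ENNReal.ofReal (η^2 * (j:ℝ)^2) ≤ ENNReal.ofReal ((x - (j:ℝ)) ^ 2)} := by
    intro x hx
    simp only [Set.mem_setOf_eq] at hx ⊢
    apply ENNReal.ofReal_le_ofReal
    have h1 : η * j ≤ (j:ℝ) - x := by nlinarith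
    have h2 : (η * j)^2 ≤ ((j:ℝ) - x)^2 := by
      apply pow_le_pow_left₀ (by positivity) h1
    nlinarith
  have hlint : ∫⁻ x : ℝ, ENNReal.ofReal ((x - (j:ℝ)) ^ 2) ∂(gammaMeasure (j:ℝ) 1) =
      ENNReal.ofReal (j : ℝ) := by
    rw [gammaMeasure, lintegral_withDensity_eq_lintegral_mul _ (gammaPDF_measurable _) hmeasf]
    simp_rw [Pi.mul_apply, mul_comm]
    exact gamma_var j hj
  calc gammaMeasure (j:ℝ) 1 {x : ℝ | x < (1 - η) * j}
      ≤ gammaMeasure (j:ℝ) 1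
        {x : ℝ | ENNReal.ofReal (η^2 * (j:ℝ)^2) ≤ ENNReal.ofReal ((x - (j:ℝ)) ^ 2)} :=
        measure_mono hsub
    _ ≤ (∫⁻ x : ℝ, ENNReal.ofReal ((x - (j:ℝ)) ^ 2) ∂(gammaMeasure (j:ℝ) 1)) /
        ENNReal.ofReal (η^2 * (j:ℝ)^2) :=
        meas_ge_le_lintegral_div hmeasf.aemeasurable
          (by simp [ENNReal.ofReal_pos]; positivity) ENNReal.ofReal_ne_top
    _ = ENNReal.ofReal (j : ℝ) / ENNReal.ofReal (η^2 * (j:ℝ)^2) := by rw [hlint]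
    _ = ENNReal.ofReal (1 / (η^2 * j)) := by
        rw [← ENNReal.ofReal_div_of_pos (by positivity)]
        congr 1
        field_simp
  
lemma exp_cdf {r : ℝ} (hr : 0 < r) {c : ℝ} (hc : 0 ≤ c) :
    expMeasure r (Set.Iic c) = ENNReal.ofReal (1 - Real.exp (-(r * c))) := by
  haveI := isProbabilityMeasure_expMeasure hr
  have h1 := cdf_expMeasure_eq hr c
  rw [if_pos hc] at h1
  have h2 : cdf (expMeasure r) c = ((expMeasure r) (Set.Iic c)).toReal :=
    cdf_eq_real _ c
  rw [h2] at h1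
  rw [← h1, ENNReal.ofReal_toReal (measure_ne_top _ _)]

end Helpers

/-- Analytical core of Theorem 3 (M-block Rayleigh fading on the
jammer-to-Willie channel, k symbols per block): there is a transmit power
`σ_a² > 0` not depending on `k` such that, against Willie's optimal likelihood
ratio test with threshold `γ`, the sum of the false-alarm and missed-detection
probabilities exceeds `1 - ε` for all `k` large. -/
theorem multi_block_fading_covertness_core
    (M : ℕ) (hM : 1 ≤ M)
    (σw2 ζ γ ε : ℝ) (hσw2 : 0 < σw2) (hζ : 0 < ζ) (hγ : 0 < γ)
    (hε : ε ∈ Set.Ioo (0:ℝ) 1)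
    (Λ : ℕ → ℝ → ℝ → ℝ)
    (hΛ : ∀ (k : ℕ) (σa2 z : ℝ), Λ k σa2 z = Real.exp (σa2 / ζ) *
      (∫ v in Set.Ioi (σw2 + σa2),
        (v ^ k)⁻¹ * Real.exp (-z / v) * Real.exp (-v / ζ)) /
      (∫ v in Set.Ioi σw2,
        (v ^ k)⁻¹ * Real.exp (-z / v) * Real.exp (-v / ζ)))
    (Ω : Type*) [MeasureSpace Ω] [IsProbabilityMeasure (ℙ : Measure Ω)]
    (E : Fin M → Ω → ℝ) (G : ℕ → Fin M → Ω → ℝ)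
    (hE_meas : ∀ m, Measurable (E m))
    (hG_meas : ∀ k m, Measurable (G k m))
    (hE_law : ∀ m, Measure.map (E m) ℙ = expMeasure ζ⁻¹)
    (hG_law : ∀ k : ℕ, 1 ≤ k → ∀ m, Measure.map (G k m) ℙ = gammaMeasure k 1)
    (hindep : ∀ k : ℕ,
      iIndepFun (m := fun _ : Fin M ⊕ Fin M => (inferInstance : MeasurableSpace ℝ))
        (Sum.elim E (G k)) ℙ) :
    ∃ σa2 : ℝ, 0 < σa2 ∧ ∃ K : ℕ, 1 ≤ K ∧ ∀ k : ℕ, K ≤ k →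
      (ℙ {ω : Ω | γ <
          ∏ m, Λ k σa2 ((σw2 + E m ω) * G k m ω)}).toReal +
      (ℙ {ω : Ω |
          ∏ m, Λ k σa2 ((σw2 + E m ω + σa2) * G k m ω) ≤ γ}).toReal
        > 1 - ε := by
  obtain ⟨hε0, hε1⟩ := hε
  have hMpos : (0:ℝ) < M := by exact_mod_cast hM
  rcases le_or_gt γ 1 with hγ1 | hγ1
  · -- hard case : γ ≤ 1
    set s : ℝ := ζ * ε / (8 * M) with hsdef
    have hs : 0 < s := by rw [hsdef]; positivity
    set b : ℝ := σw2 + s with hbdef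
    have hb : 0 < b := by rw [hbdef]; linarith
    set c2 : ℝ := b + s / 2 with hc2def
    set η : ℝ := s / (2 * (b + s)) with hηdef
    have hη : 0 < η := by rw [hηdef]; positivity
    have hη1 : η < 1 := by
      rw [hηdef, div_lt_one (by linarith)]
      linarith
    have hc2eq : (1 - η) * (b + s) = c2 := by
      have h2 : η * (b + s) = s / 2 := by
        rw [hηdef]; field_simp
      rw [hc2def]; linear_combination -h2
    have hT : 1 < Real.exp (s / ζ) := by
      rw [show (1:ℝ) = Real.exp 0 by simp]
      exact Real.exp_lt_exp.mpr (by positivity)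
    obtain ⟨K1, hK11, hK1⟩ := helperC hσw2 (show σw2 < b by rw [hbdef]; linarith)
      (show b < c2 by rw [hc2def]; linarith) hζ hT
    set K2 : ℕ := ⌈2 * (M:ℝ) / (η ^ 2 * ε)⌉₊ + 1 with hK2def
    refine ⟨s, hs, max K1 K2, le_trans hK11 (le_max_left _ _), ?_⟩
    intro k hk
    have hk1 : 1 ≤ k := le_trans hK11 (le_trans (le_max_left _ _) hk)
    have hkR : (1:ℝ) ≤ (k:ℝ) := by exact_mod_cast hk1
    -- the good event
    have hsub : (⋂ m, ({ω : Ω | s + s < E m ω} ∩ {ω : Ω | (1 - η) * k ≤ G k m ω})) ⊆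
        {ω : Ω | γ < ∏ m, Λ k s ((σw2 + E m ω) * G k m ω)} := by
      intro ω hω
      simp only [Set.mem_iInter, Set.mem_inter_iff, Set.mem_setOf_eq] at hω
      simp only [Set.mem_setOf_eq]
      have hfac : ∀ m, 1 < Λ k s ((σw2 + E m ω) * G k m ω) := by
        intro m
        obtain ⟨hE', hG'⟩ := hω m
        have hz : (k:ℝ) * c2 ≤ (σw2 + E m ω) * G k m ω := by
          have h1 : b + s ≤ σw2 + E m ω := by rw [hbdef]; linarith
          have h2 : (0:ℝ) ≤ (1 - η) * k := by
            apply mul_nonneg (by linarith) (by linarith)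
          calc (k:ℝ) * c2 = (b + s) * ((1 - η) * k) := by rw [← hc2eq]; ring
            _ ≤ (σw2 + E m ω) * G k m ω :=
              mul_le_mul h1 hG' h2 (by linarith)
        obtain ⟨hIbpos, hIlt⟩ := hK1 k (le_trans (le_max_left _ _) hk) _ hz
        have hIab : (∫ v in Set.Ioi b, (v ^ k)⁻¹ *
              Real.exp (-((σw2 + E m ω) * G k m ω) / v) * Real.exp (-v / ζ)) ≤
            ∫ v in Set.Ioi σw2, (v ^ k)⁻¹ *
              Real.exp (-((σw2 + E m ω) * G k m ω) / v) * Real.exp (-v / ζ) := by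
          apply setIntegral_mono_set (cov_integrableOn hσw2 hζ k _)
          · exact (ae_restrict_mem measurableSet_Ioi).mono
              (fun v hv => cov_nonneg hσw2 k _ ζ v hv)
          · exact HasSubset.Subset.eventuallyLE (Set.Ioi_subset_Ioi (by rw [hbdef]; linarith))
        have hIapos : 0 < ∫ v in Set.Ioi σw2, (v ^ k)⁻¹ *
            Real.exp (-((σw2 + E m ω) * G k m ω) / v) * Real.exp (-v / ζ) :=
          lt_of_lt_of_le hIbpos hIab
        rw [hΛ, show σw2 + s = b from rfl]
        exact (one_lt_div hIapos).mpr hIlt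
      have hne : (Finset.univ : Finset (Fin M)).Nonempty := ⟨⟨0, hM⟩, Finset.mem_univ _⟩
      calc γ ≤ 1 := hγ1
        _ = ∏ _m : Fin M, (1:ℝ) := by rw [Finset.prod_const_one]
        _ < ∏ m, Λ k s ((σw2 + E m ω) * G k m ω) :=
          Finset.prod_lt_prod_of_nonempty (fun i _ => one_pos) (fun i _ => hfac i) hne
    -- bad event
    set Bad : Set Ω := ⋃ m, ({ω : Ω | E m ω ≤ s + s} ∪ {ω : Ω | G k m ω < (1 - η) * k})
      with hBaddef
    have hcompl : {ω : Ω | γ < ∏ m, Λ k s ((σw2 + E m ω) * G k m ω)}ᶜ ⊆ Bad := by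
      intro ω hω
      by_contra hcon
      rw [hBaddef] at hcon
      simp only [Set.mem_iUnion, Set.mem_union, Set.mem_setOf_eq, not_exists, not_or,
        not_le, not_lt] at hcon
      exact hω (hsub (Set.mem_iInter.mpr fun m => ⟨(hcon m).1, (hcon m).2⟩))
    have hEbound : ∀ m, ℙ {ω : Ω | E m ω ≤ s + s} ≤ ENNReal.ofReal (ε / (4 * M)) := by
      intro m
      have hpre : {ω : Ω | E m ω ≤ s + s} = E m ⁻¹' (Set.Iic (s + s)) := rfl
      rw [hpre, ← Measure.map_apply (hE_meas m) measurableSet_Iic, hE_law m,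
        exp_cdf (inv_pos.mpr hζ) (by positivity)]
      apply ENNReal.ofReal_le_ofReal
      have h1 : 1 - Real.exp (-(ζ⁻¹ * (s + s))) ≤ ζ⁻¹ * (s + s) := by
        have := Real.add_one_le_exp (-(ζ⁻¹ * (s + s)))
        linarith
      have h2 : ζ⁻¹ * (s + s) = ε / (4 * M) := by
        rw [hsdef]; field_simp; ring
      linarith
    have hGbound : ∀ m, ℙ {ω : Ω | G k m ω < (1 - η) * k} ≤
        ENNReal.ofReal (1 / (η ^ 2 * k)) := by
      intro m
      have hpre : {ω : Ω | G k m ω < (1 - η) * k} = G k m ⁻¹' (Set.Iio ((1 - η) * k)) := rfl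
      rw [hpre, ← Measure.map_apply (hG_meas k m) measurableSet_Iio, hG_law k hk1 m]
      exact gamma_tail k hk1 hη hη1
    have hMk : (M:ℝ) * (1 / (η ^ 2 * k)) ≤ ε / 2 := by
      have hKk : (K2 : ℝ) ≤ (k:ℝ) := by exact_mod_cast le_trans (le_max_right K1 K2) hk
      have h6 := Nat.le_ceil (2 * (M:ℝ) / (η ^ 2 * ε))
      have h7 : ((⌈2 * (M:ℝ) / (η ^ 2 * ε)⌉₊ : ℝ)) + 1 = (K2:ℝ) := by
        rw [hK2def]; push_cast; ring
      have h5 : 2 * (M:ℝ) / (η ^ 2 * ε) ≤ (k:ℝ) := by linarith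
      have h8 : 2 * (M:ℝ) ≤ (k:ℝ) * (η ^ 2 * ε) := by
        rw [div_le_iff₀ (by positivity)] at h5
        linarith
      rw [mul_one_div, div_le_iff₀ (by positivity)]
      nlinarith
    have hBad2 : ℙ Bad ≤ ENNReal.ofReal (3 * ε / 4) := by
      have hstep : ℙ Bad ≤ (M : ℝ≥0∞) *
          (ENNReal.ofReal (ε / (4 * M)) + ENNReal.ofReal (1 / (η ^ 2 * k))) := by
        calc ℙ Bad ≤ ∑' m : Fin M,
              ℙ ({ω : Ω | E m ω ≤ s + s} ∪ {ω : Ω | G k m ω < (1 - η) * k}) :=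
              measure_iUnion_le _
          _ ≤ ∑' _m : Fin M,
              (ENNReal.ofReal (ε / (4 * M)) + ENNReal.ofReal (1 / (η ^ 2 * k))) :=
              ENNReal.tsum_le_tsum (fun m => le_trans (measure_union_le _ _)
                (add_le_add (hEbound m) (hGbound m)))
          _ = (M : ℝ≥0∞) *
              (ENNReal.ofReal (ε / (4 * M)) + ENNReal.ofReal (1 / (η ^ 2 * k))) := by
              rw [tsum_fintype, Finset.sum_const, Finset.card_univ, Fintype.card_fin,
                nsmul_eq_mul, mul_add]
      refine le_trans hstep ?_
      rw [← ENNReal.ofReal_natCast M, ← ENNReal.ofReal_add (by positivity) (by positivity),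
        ← ENNReal.ofReal_mul (by positivity)]
      apply ENNReal.ofReal_le_ofReal
      have h9 : (M:ℝ) * (ε / (4 * M)) = ε / 4 := by field_simp
      calc (M:ℝ) * (ε / (4 * M) + 1 / (η ^ 2 * k))
          = (M:ℝ) * (ε / (4 * M)) + (M:ℝ) * (1 / (η ^ 2 * k)) := by ring
        _ ≤ ε / 4 + ε / 2 := by rw [h9]; linarith
        _ ≤ 3 * ε / 4 := by linarith
    have hBadReal : (ℙ Bad).toReal ≤ 3 * ε / 4 :=
      ENNReal.toReal_le_of_le_ofReal (by positivity) hBad2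
    have hunion : {ω : Ω | γ < ∏ m, Λ k s ((σw2 + E m ω) * G k m ω)} ∪ Bad = Set.univ :=
      Set.compl_subset_iff_union.mp hcompl
    have h1 : (1:ℝ≥0∞) ≤ ℙ {ω : Ω | γ < ∏ m, Λ k s ((σw2 + E m ω) * G k m ω)} + ℙ Bad := by
      rw [← measure_univ (μ := (ℙ : Measure Ω)), ← hunion]
      exact measure_union_le _ _
    have h2 := ENNReal.toReal_mono
      (ENNReal.add_ne_top.mpr ⟨measure_ne_top _ _, measure_ne_top _ _⟩) h1
    rw [ENNReal.toReal_one, ENNReal.toReal_add (measure_ne_top _ _) (measure_ne_top _ _)] at h2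
    have h3 : (0:ℝ) ≤
        (ℙ {ω : Ω | ∏ m, Λ k s ((σw2 + E m ω + s) * G k m ω) ≤ γ}).toReal :=
      ENNReal.toReal_nonneg
    linarith
  · -- easy case : 1 < γ
    have hlogγ : 0 < Real.log γ := Real.log_pos hγ1
    set s : ℝ := ζ * Real.log γ / M with hsdef
    have hs : 0 < s := by rw [hsdef]; positivity
    refine ⟨s, hs, 1, le_rfl, ?_⟩
    intro k hk
    have hall : {ω : Ω | ∏ m, Λ k s ((σw2 + E m ω + s) * G k m ω) ≤ γ} = Set.univ := by
      apply Set.eq_univ_of_forall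
      intro ω
      simp only [Set.mem_setOf_eq]
      have hbnd : ∀ m : Fin M,
          0 ≤ Λ k s ((σw2 + E m ω + s) * G k m ω) ∧
          Λ k s ((σw2 + E m ω + s) * G k m ω) ≤ Real.exp (s / ζ) := by
        intro m
        rw [hΛ]
        exact lambda_bounds hσw2 hs.le hζ k _
      calc ∏ m, Λ k s ((σw2 + E m ω + s) * G k m ω)
          ≤ ∏ _m : Fin M, Real.exp (s / ζ) :=
            Finset.prod_le_prod (fun i _ => (hbnd i).1) (fun i _ => (hbnd i).2)
        _ = Real.exp (s / ζ) ^ M := by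
            rw [Finset.prod_const, Finset.card_univ, Fintype.card_fin]
        _ = γ := by
            rw [← Real.exp_nat_mul]
            have hsζ : (M:ℝ) * (s / ζ) = Real.log γ := by
              rw [hsdef]; field_simp
            rw [hsζ, Real.exp_log hγ]
    rw [hall, measure_univ, ENNReal.toReal_one]
    have h0 : (0:ℝ) ≤
        (ℙ {ω : Ω | γ < ∏ m, Λ k s ((σw2 + E m ω) * G k m ω)}).toReal :=
      ENNReal.toReal_nonneg
    linarith
end
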